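/- arXiv:1807.02174 — 5 statements merged into one kernel-verified Lean document; each statement's English description precedes it below -/
import Mathlib

section
/- Let 1 ≤ p < ∞ and let μ be a measure on ℝ. Then μ is locally p-admissible if and only if μ is semilocally p-admissible, i.e., p-admissible within every ball B₀ ⊂ ℝ with constants depending on B₀. -/
open MeasureTheory Set Filter
open scoped ENNReal NNReal Topology
noncomputable section

/-- A "measure on ℝ" in the sense of the paper: positive and finite on all
nonempty bounded open intervals (balls). -/
def IsMeasureOnR (μ : Measure ℝ) : Prop :=
  ∀ a b : ℝ, a < b → 0 < μ (Ioo a b) ∧ μ (Ioo a b) < ⊤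

/-- `g` is an upper gradient of `u` on the interval `J ⊆ ℝ`. -/
def IsUpperGradientOn (g u : ℝ → ℝ) (J : Set ℝ) : Prop :=
  (∀ x, 0 ≤ g x) ∧ Measurable g ∧
    ∀ a b : ℝ, a ≤ b → Icc a b ⊆ J →
      ENNReal.ofReal |u b - u a| ≤ ∫⁻ t in Icc a b, ENNReal.ofReal (g t)

/-- `μ` is doubling within the set `B₀` with constant `Cd`. -/
def DoublingWithinC (μ : Measure ℝ) (Cd : ℝ≥0∞) (B₀ : Set ℝ) : Prop :=
  ∀ x r : ℝ, 0 < r → Ioo (x - r) (x + r) ⊆ B₀ →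
    μ (Ioo (x - 2*r) (x + 2*r)) ≤ Cd * μ (Ioo (x - r) (x + r))

/-- `μ` is doubling within the set `B₀`. -/
def DoublingWithin (μ : Measure ℝ) (B₀ : Set ℝ) : Prop :=
  ∃ Cd : ℝ≥0∞, 0 < Cd ∧ Cd < ⊤ ∧ DoublingWithinC μ Cd B₀

/-- The left-hand side `⨍_B |u - u_B| dμ` of the Poincaré inequality,
computed in `ℝ≥0∞`. -/
def PoinLHS (μ : Measure ℝ) (u : ℝ → ℝ) (B : Set ℝ) : ℝ≥0∞ :=
  (∫⁻ t in B, ENNReal.ofReal |u t - ⨍ s in B, u s ∂μ| ∂μ) / μ B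

/-- The quantity `(⨍_B g^p dμ)^(1/p)` computed in `ℝ≥0∞`. -/
def PoinRHS (μ : Measure ℝ) (g : ℝ → ℝ≥0∞) (p : ℝ) (B : Set ℝ) : ℝ≥0∞ :=
  ((∫⁻ t in B, g t ^ p ∂μ) / μ B) ^ (1/p)

/-- `μ` supports the `p`-Poincaré inequality within `B₀` with constant `C`
and dilation constant `lam`. -/
def PoincareWithinC (μ : Measure ℝ) (p C lam : ℝ) (B₀ : Set ℝ) : Prop :=
  ∀ x r : ℝ, 0 < r → Ioo (x - r) (x + r) ⊆ B₀ →
    ∀ u g : ℝ → ℝ,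
      IntegrableOn u (Ioo (x - lam*r) (x + lam*r)) μ →
      IsUpperGradientOn g u (Ioo (x - lam*r) (x + lam*r)) →
      PoinLHS μ u (Ioo (x - r) (x + r)) ≤
        ENNReal.ofReal (C * r) *
          PoinRHS μ (fun t => ENNReal.ofReal (g t)) p (Ioo (x - lam*r) (x + lam*r))

/-- `μ` supports the `p`-Poincaré inequality within `B₀`. -/
def PoincareWithin (μ : Measure ℝ) (p : ℝ) (B₀ : Set ℝ) : Prop :=
  ∃ C > (0:ℝ), ∃ lam ≥ (1:ℝ), PoincareWithinC μ p C lam B₀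

/-- `μ` is `p`-admissible within `B₀`. -/
def AdmissibleWithin (μ : Measure ℝ) (p : ℝ) (B₀ : Set ℝ) : Prop :=
  DoublingWithin μ B₀ ∧ PoincareWithin μ p B₀

/-- `μ` is locally `p`-admissible. -/
def LocallyAdmissible (μ : Measure ℝ) (p : ℝ) : Prop :=
  ∀ x : ℝ, ∃ R > (0:ℝ), AdmissibleWithin μ p (Ioo (x - R) (x + R))

/-- The pointwise upper Lipschitz constant
`Lip u(x) = limsup_{y→x, y ∈ s} |u(y)-u(x)|/|y-x|`, computed in `ℝ≥0∞`. -/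
def eLipWithin (u : ℝ → ℝ) (s : Set ℝ) (x : ℝ) : ℝ≥0∞ :=
  Filter.limsup (fun y => ENNReal.ofReal (|u y - u x| / |y - x|)) (𝓝[s \ {x}] x)

/-- `μ` supports the Lipschitz `p`-Poincaré inequality within `B₀` with
constant `C` and dilation constant `lam`. -/
def LipPoincareWithinC (μ : Measure ℝ) (p C lam : ℝ) (B₀ : Set ℝ) : Prop :=
  ∀ x r : ℝ, 0 < r → Ioo (x - r) (x + r) ⊆ B₀ →
    ∀ (u : ℝ → ℝ) (K : ℝ≥0), LipschitzOnWith K u (Ioo (x - lam*r) (x + lam*r)) →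
      PoinLHS μ u (Ioo (x - r) (x + r)) ≤
        ENNReal.ofReal (C * r) *
          PoinRHS μ (eLipWithin u (Ioo (x - lam*r) (x + lam*r))) p
            (Ioo (x - lam*r) (x + lam*r))

/-- `μ` supports the Lipschitz `p`-Poincaré inequality within `B₀`. -/
def LipPoincareWithin (μ : Measure ℝ) (p : ℝ) (B₀ : Set ℝ) : Prop :=
  ∃ C > (0:ℝ), ∃ lam ≥ (1:ℝ), LipPoincareWithinC μ p C lam B₀

/-- `μ` is Lipschitz `p`-admissible within `B₀`. -/
def LipAdmissibleWithin (μ : Measure ℝ) (p : ℝ) (B₀ : Set ℝ) : Prop :=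
  DoublingWithin μ B₀ ∧ LipPoincareWithin μ p B₀

/-- `μ` is locally Lipschitz `p`-admissible. -/
def LocallyLipAdmissible (μ : Measure ℝ) (p : ℝ) : Prop :=
  ∀ x : ℝ, ∃ R > (0:ℝ), LipAdmissibleWithin μ p (Ioo (x - R) (x + R))

/-- The Muckenhoupt `A_p` condition for `w` on the set `B` with constant `C`
(for `p = 1` and `p ≠ 1` respectively). -/
def ApOn (p : ℝ) (w : ℝ → ℝ) (B : Set ℝ) (C : ℝ) : Prop :=
  (p = 1 →
    (∫⁻ x in B, ENNReal.ofReal (w x)) / volume B ≤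
      ENNReal.ofReal C * essInf (fun x => ENNReal.ofReal (w x)) (volume.restrict B)) ∧
  (p ≠ 1 →
    (∫⁻ x in B, ENNReal.ofReal (w x)) / volume B ≤
      ENNReal.ofReal C *
        ((∫⁻ x in B, ENNReal.ofReal (w x) ^ (1/(1-p))) / volume B) ^ (1-p))

/-- `w` is an `A_p` weight within `B₀`. -/
def ApWithin (p : ℝ) (w : ℝ → ℝ) (B₀ : Set ℝ) : Prop :=
  ∃ C > (0:ℝ), ∀ x r : ℝ, 0 < r → Ioo (x - r) (x + r) ⊆ B₀ →
    ApOn p w (Ioo (x - r) (x + r)) C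

/-- `w` is a local `A_p` weight. -/
def LocalAp (p : ℝ) (w : ℝ → ℝ) : Prop :=
  ∀ x : ℝ, ∃ R > (0:ℝ), ApWithin p w (Ioo (x - R) (x + R))

/-- `w` is a global `A_p` weight. -/
def GlobalAp (p : ℝ) (w : ℝ → ℝ) : Prop :=
  ∃ C > (0:ℝ), ∀ x r : ℝ, 0 < r → ApOn p w (Ioo (x - r) (x + r)) C

end

noncomputable section Aux

variable {μ : Measure ℝ}

/-- abbreviation for the ball `Ioo (x-r) (x+r)` -/
def bI (x r : ℝ) : Set ℝ := Set.Ioo (x - r) (x + r)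

lemma bI_def (x r : ℝ) : bI x r = Set.Ioo (x - r) (x + r) := rfl

lemma bI_subset_bI {x r y s : ℝ} (h1 : y - s ≤ x - r) (h2 : x + r ≤ y + s) :
    bI x r ⊆ bI y s := Ioo_subset_Ioo h1 h2

lemma mem_bI_self {x r : ℝ} (hr : 0 < r) : x ∈ bI x r :=
  ⟨by linarith, by linarith⟩

lemma measure_bI_pos (hμ : IsMeasureOnR μ) {x r : ℝ} (hr : 0 < r) :
    0 < μ (bI x r) := (hμ _ _ (by linarith)).1

lemma measure_bI_lt_top (hμ : IsMeasureOnR μ) (x r : ℝ) : μ (bI x r) < ⊤ := by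
  rcases lt_or_ge (x - r) (x + r) with h | h
  · exact (hμ _ _ h).2
  · rw [bI, Ioo_eq_empty (by exact not_lt.mpr h)]
    simp

lemma IsUpperGradientOn.mono {g u : ℝ → ℝ} {S T : Set ℝ} (h : IsUpperGradientOn g u T)
    (hst : S ⊆ T) : IsUpperGradientOn g u S :=
  ⟨h.1, h.2.1, fun a b hab hsub => h.2.2 a b hab (hsub.trans hst)⟩

/-- uniform lower bound on measures of δ-balls centered in a compact interval -/
lemma uniform_lower_bound (hμ : IsMeasureOnR μ) (c d δ : ℝ) (hcd : c ≤ d) (hδ : 0 < δ) :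
    ∃ m : ℝ≥0∞, 0 < m ∧ m ≠ ⊤ ∧ ∀ x ∈ Icc c d, m ≤ μ (bI x δ) := by
  have hcov : Icc c d ⊆ ⋃ y : ℝ, bI y (δ/2) := fun x _ =>
    mem_iUnion.2 ⟨x, mem_bI_self (by linarith)⟩
  obtain ⟨t, ht⟩ := isCompact_Icc.elim_finite_subcover (fun y : ℝ => bI y (δ/2))
    (fun y => isOpen_Ioo) hcov
  have htne : t.Nonempty := by
    by_contra hne
    have : c ∈ ⋃ y ∈ t, bI y (δ/2) := ht ⟨le_refl c, hcd⟩
    rw [Finset.not_nonempty_iff_eq_empty.mp hne] at this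
    simpa using this
  refine ⟨min 1 (t.inf' htne fun y => μ (bI y (δ/2))), ?_, ?_, ?_⟩
  · refine lt_min one_pos ?_
    rw [Finset.lt_inf'_iff]
    exact fun y _ => measure_bI_pos hμ (by linarith)
  · exact ne_top_of_le_ne_top ENNReal.one_ne_top (min_le_left _ _)
  · intro x hx
    obtain ⟨y, hyt, hxy⟩ : ∃ y ∈ t, x ∈ bI y (δ/2) := by
      have := ht hx
      simpa using this
    calc min 1 (t.inf' htne fun y => μ (bI y (δ/2))) ≤ μ (bI y (δ/2)) :=
          le_trans (min_le_right _ _) (Finset.inf'_le _ hyt)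
      _ ≤ μ (bI x δ) := by
          apply measure_mono
          rcases hxy with ⟨h1, h2⟩
          exact bI_subset_bI (by linarith) (by linarith)

end Aux

noncomputable section Aux2

variable {μ : Measure ℝ}

lemma aem_ofReal_abs {u : ℝ → ℝ} {ν : Measure ℝ} (hu : AEMeasurable u ν) (a : ℝ) :
    AEMeasurable (fun t => ENNReal.ofReal |u t - a|) ν := by
  have : AEMeasurable (fun t => ENNReal.ofReal ‖u t - a‖) ν :=
    (hu.sub aemeasurable_const).norm.ennreal_ofReal
  simpa [Real.norm_eq_abs] using this

/-- triangle primitive in `ℝ≥0∞` -/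
lemma prim_abs_mul_measure_le {u : ℝ → ℝ} {P : Set ℝ}
    (hu : AEMeasurable u (μ.restrict P)) (a b : ℝ) :
    ENNReal.ofReal |a - b| * μ P ≤
      (∫⁻ t in P, ENNReal.ofReal |u t - a| ∂μ) + ∫⁻ t in P, ENNReal.ofReal |u t - b| ∂μ := by
  have hpt : ∀ t, ENNReal.ofReal |a - b| ≤
      ENNReal.ofReal |u t - a| + ENNReal.ofReal |u t - b| := by
    intro t
    rw [← ENNReal.ofReal_add (abs_nonneg _) (abs_nonneg _)]
    apply ENNReal.ofReal_le_ofReal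
    calc |a - b| ≤ |a - u t| + |u t - b| := abs_sub_le _ _ _
      _ = |u t - a| + |u t - b| := by rw [abs_sub_comm]
  calc ENNReal.ofReal |a - b| * μ P = ∫⁻ _ in P, ENNReal.ofReal |a - b| ∂μ :=
        (setLIntegral_const _ _).symm
    _ ≤ ∫⁻ t in P, (ENNReal.ofReal |u t - a| + ENNReal.ofReal |u t - b|) ∂μ :=
        lintegral_mono fun t => hpt t
    _ = _ := lintegral_add_left' (aem_ofReal_abs hu a) _

/-- `|⨍_B u - c| · μ B ≤ ∫⁻_B |u - c|` -/
lemma avg_sub_const_mul_measure_le {u : ℝ → ℝ} {B : Set ℝ}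
    (hu : IntegrableOn u B μ) (hB0 : μ B ≠ 0) (hBt : μ B ≠ ⊤) (c : ℝ) :
    ENNReal.ofReal |(⨍ s in B, u s ∂μ) - c| * μ B ≤
      ∫⁻ t in B, ENNReal.ofReal |u t - c| ∂μ := by
  haveI : IsFiniteMeasure (μ.restrict B) :=
    ⟨by rwa [Measure.restrict_apply_univ, lt_top_iff_ne_top]⟩
  have hT : 0 < (μ B).toReal := ENNReal.toReal_pos hB0 hBt
  have habs : |∫ s in B, (u s - c) ∂μ| ≤ ∫ s in B, |u s - c| ∂μ := by
    have := norm_integral_le_integral_norm (μ := μ.restrict B) (fun s => u s - c)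
    simpa [Real.norm_eq_abs] using this
  have key : |(⨍ s in B, u s ∂μ) - c| ≤ (μ B).toReal⁻¹ * ∫ s in B, |u s - c| ∂μ := by
    rw [setAverage_eq]
    simp only [Measure.real]
    have h1 : ((μ B).toReal⁻¹ • ∫ s in B, u s ∂μ) - c
        = (μ B).toReal⁻¹ * ∫ s in B, (u s - c) ∂μ := by
      rw [integral_sub hu (integrable_const c), integral_const, smul_eq_mul, smul_eq_mul,
        mul_sub]
      congr 1
      field_simp
      simp [Measure.real]
    rw [h1, abs_mul, abs_of_nonneg (by positivity)]
    exact mul_le_mul_of_nonneg_left habs (by positivity)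
  have h3 : ENNReal.ofReal (∫ s in B, |u s - c| ∂μ) = ∫⁻ t in B, ENNReal.ofReal |u t - c| ∂μ :=
    ofReal_integral_eq_lintegral_ofReal (hu.sub (integrable_const c)).abs
      (Filter.Eventually.of_forall fun t => abs_nonneg _)
  have hnn : 0 ≤ ∫ s in B, |u s - c| ∂μ := integral_nonneg fun s => abs_nonneg _
  calc ENNReal.ofReal |(⨍ s in B, u s ∂μ) - c| * μ B
      ≤ ENNReal.ofReal ((μ B).toReal⁻¹ * ∫ s in B, |u s - c| ∂μ) * μ B :=
        mul_le_mul_left (ENNReal.ofReal_le_ofReal key) _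
    _ = ENNReal.ofReal (∫ s in B, |u s - c| ∂μ) * (ENNReal.ofReal (μ B).toReal⁻¹ * μ B) := by
        rw [ENNReal.ofReal_mul (by positivity)]; ring
    _ = ∫⁻ t in B, ENNReal.ofReal |u t - c| ∂μ := by
        rw [← h3]
        have : ENNReal.ofReal (μ B).toReal⁻¹ * μ B = 1 := by
          nth_rewrite 2 [← ENNReal.ofReal_toReal hBt]
          rw [← ENNReal.ofReal_mul (by positivity), inv_mul_cancel₀ hT.ne']
          simp
        rw [this, mul_one]

end Aux2

noncomputable section Aux3

variable {μ : Measure ℝ} {p : ℝ}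

lemma lintegral_le_of_poinLHS {u : ℝ → ℝ} {B : Set ℝ} {X : ℝ≥0∞}
    (h : PoinLHS μ u B ≤ X) (hB0 : μ B ≠ 0) (hBt : μ B ≠ ⊤) :
    (∫⁻ t in B, ENNReal.ofReal |u t - ⨍ s in B, u s ∂μ| ∂μ) ≤ X * μ B :=
  (ENNReal.div_le_iff_le_mul (Or.inl hB0) (Or.inl hBt)).mp h

lemma poinRHS_comp {g : ℝ → ℝ≥0∞} {pp : ℝ} (hpp : 0 < pp) {S T : Set ℝ} (hST : S ⊆ T)
    {E : ℝ≥0∞} (hE0 : E ≠ 0) (hEt : E ≠ ⊤) (hS0 : μ S ≠ 0) (hTt : μ T ≠ ⊤)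
    (hle : μ T ≤ E * μ S) :
    PoinRHS μ g pp S ≤ E ^ (1/pp) * PoinRHS μ g pp T := by
  have hSt : μ S ≠ ⊤ := ne_top_of_le_ne_top hTt (measure_mono hST)
  have hinvnn : (0:ℝ) ≤ 1/pp := by positivity
  unfold PoinRHS
  rw [← ENNReal.mul_rpow_of_nonneg _ _ hinvnn]
  apply ENNReal.rpow_le_rpow _ hinvnn
  have hI : (∫⁻ t in S, g t ^ pp ∂μ) ≤ ∫⁻ t in T, g t ^ pp ∂μ :=
    lintegral_mono' (Measure.restrict_mono hST le_rfl) le_rfl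
  have hinv : (μ S)⁻¹ ≤ E * (μ T)⁻¹ := by
    rw [← div_eq_mul_inv]
    rw [ENNReal.le_div_iff_mul_le (Or.inr hE0) (Or.inr hEt)]
    calc (μ S)⁻¹ * μ T ≤ (μ S)⁻¹ * (E * μ S) := mul_le_mul_right hle _
      _ = E * ((μ S)⁻¹ * μ S) := by ring
      _ = E := by rw [ENNReal.inv_mul_cancel hS0 hSt, mul_one]
  calc (∫⁻ t in S, g t ^ pp ∂μ) / μ S = (∫⁻ t in S, g t ^ pp ∂μ) * (μ S)⁻¹ :=
        div_eq_mul_inv _ _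
    _ ≤ (∫⁻ t in T, g t ^ pp ∂μ) * (E * (μ T)⁻¹) := mul_le_mul' hI hinv
    _ = E * ((∫⁻ t in T, g t ^ pp ∂μ) / μ T) := by rw [div_eq_mul_inv]; ring

lemma doubling_iter {Cd : ℝ≥0∞} {J : Set ℝ} (hD : DoublingWithinC μ Cd J)
    {x r lam : ℝ} (hr : 0 < r) (hlam : 1 ≤ lam) (hJ : bI x (lam * r) ⊆ J)
    {k : ℕ} (hk : lam ≤ 2 ^ k) :
    μ (bI x (lam * r)) ≤ Cd ^ k * μ (bI x r) := by
  have claim : ∀ j : ℕ, μ (bI x (min lam (2 ^ j) * r)) ≤ Cd ^ j * μ (bI x r) := by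
    intro j
    induction j with
    | zero => simp [min_eq_right hlam]
    | succ j ih =>
      set s := min lam ((2:ℝ) ^ j) * r with hs_def
      have hmin : 0 < min lam ((2:ℝ) ^ j) := lt_min (by linarith) (by positivity)
      have hs : 0 < s := by positivity
      have hle2 : min lam ((2:ℝ) ^ (j+1)) * r ≤ 2 * s := by
        rw [hs_def, ← mul_assoc]
        apply mul_le_mul_of_nonneg_right _ hr.le
        rcases le_total lam ((2:ℝ) ^ j) with h | h
        · have hpj : (0:ℝ) < 2 ^ j := by positivity
          have hps : (2:ℝ) ^ (j+1) = 2 * 2 ^ j := by ring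
          have h2 : lam ≤ (2:ℝ) ^ (j+1) := by linarith
          rw [min_eq_left h, min_eq_left h2]
          linarith
        · calc min lam ((2:ℝ) ^ (j+1)) ≤ (2:ℝ) ^ (j+1) := min_le_right _ _
            _ = 2 * (2:ℝ) ^ j := by ring
            _ = 2 * min lam ((2:ℝ)^j) := by rw [min_eq_right h]
      have hsubJ : bI x s ⊆ J := by
        refine (bI_subset_bI (y := x) (s := lam * r) ?_ ?_).trans hJ
        · have : s ≤ lam * r := mul_le_mul_of_nonneg_right (min_le_left _ _) hr.le
          linarith
        · have : s ≤ lam * r := mul_le_mul_of_nonneg_right (min_le_left _ _) hr.le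
          linarith
      calc μ (bI x (min lam ((2:ℝ) ^ (j+1)) * r)) ≤ μ (bI x (2 * s)) := by
            apply measure_mono
            have : min lam ((2:ℝ) ^ (j+1)) * r ≤ 2 * s := hle2
            exact bI_subset_bI (by linarith) (by linarith)
        _ ≤ Cd * μ (bI x s) := hD x s hs hsubJ
        _ ≤ Cd * (Cd ^ j * μ (bI x r)) := mul_le_mul_right ih _
        _ = Cd ^ (j+1) * μ (bI x r) := by ring
  have := claim k
  rwa [min_eq_left hk] at this

/-- data extracted from local admissibility on a compact interval -/
lemma cover_data (hloc : LocallyAdmissible μ p) (c d : ℝ) (hcd : c ≤ d) :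
    ∃ δ0 Cp lam0 : ℝ, ∃ CD : ℝ≥0∞, 0 < δ0 ∧ 0 < Cp ∧ 1 ≤ lam0 ∧ CD < ⊤ ∧
      ∀ x r : ℝ, x ∈ Icc c d → 0 < r → r ≤ δ0 →
        (μ (bI x (2*r)) ≤ CD * μ (bI x r)) ∧
        ∀ u g : ℝ → ℝ, IntegrableOn u (bI x (lam0 * r)) μ →
          IsUpperGradientOn g u (bI x (lam0 * r)) →
          ∃ lam : ℝ, 1 ≤ lam ∧ lam ≤ lam0 ∧
            PoinLHS μ u (bI x r) ≤ ENNReal.ofReal (Cp * r) *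
              PoinRHS μ (fun t => ENNReal.ofReal (g t)) p (bI x (lam * r)) := by
  choose R hR hAdm using hloc
  choose Cd hCd0 hCdT hDbl using fun y => (hAdm y).1
  choose C hC lam hlam hPoin using fun y => (hAdm y).2
  have hcov : Icc c d ⊆ ⋃ y : ℝ, bI y (R y / 4) := fun x _ =>
    mem_iUnion.2 ⟨x, mem_bI_self (by have := hR x; linarith)⟩
  obtain ⟨t, ht⟩ := isCompact_Icc.elim_finite_subcover (fun y : ℝ => bI y (R y / 4))
    (fun y => isOpen_Ioo) hcov
  have htne : t.Nonempty := by
    by_contra hne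
    have : c ∈ ⋃ y ∈ t, bI y (R y / 4) := ht ⟨le_refl c, hcd⟩
    rw [Finset.not_nonempty_iff_eq_empty.mp hne] at this
    simpa using this
  refine ⟨(3/4) * t.inf' htne R, max 1 (t.sup' htne C), max 1 (t.sup' htne lam),
    t.sup' htne Cd, ?_, ?_, ?_, ?_, ?_⟩
  · have : 0 < t.inf' htne R := by
      rw [Finset.lt_inf'_iff]; exact fun y _ => hR y
    linarith
  · exact lt_max_of_lt_left one_pos
  · exact le_max_left _ _
  · rw [Finset.sup'_lt_iff]
    exact fun y _ => hCdT y
  · intro x r hx hr hrδ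
    obtain ⟨y, hyt, hxy⟩ : ∃ y ∈ t, x ∈ bI y (R y / 4) := by
      have := ht hx
      simpa using this
    have hRinf : t.inf' htne R ≤ R y := Finset.inf'_le _ hyt
    have hr34 : r ≤ (3/4) * R y := by nlinarith
    obtain ⟨hxy1, hxy2⟩ := hxy
    have hsub : bI x r ⊆ bI y (R y) := bI_subset_bI (by linarith) (by linarith)
    constructor
    · calc μ (bI x (2*r)) ≤ Cd y * μ (bI x r) := hDbl y x r hr hsub
        _ ≤ t.sup' htne Cd * μ (bI x r) :=
            mul_le_mul_left (Finset.le_sup' Cd hyt) _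
    · intro u g hu hg
      have hlamle : lam y ≤ max 1 (t.sup' htne lam) :=
        le_trans (Finset.le_sup' lam hyt) (le_max_right _ _)
      have hsub2 : bI x (lam y * r) ⊆ bI x (max 1 (t.sup' htne lam) * r) := by
        have := mul_le_mul_of_nonneg_right hlamle hr.le
        exact bI_subset_bI (by linarith) (by linarith)
      refine ⟨lam y, hlam y, hlamle, ?_⟩
      have := hPoin y x r hr hsub u g (hu.mono_set hsub2) (hg.mono hsub2)
      refine le_trans this (mul_le_mul_left (ENNReal.ofReal_le_ofReal ?_) _)
      have hCle : C y ≤ max 1 (t.sup' htne C) :=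
        le_trans (Finset.le_sup' C hyt) (le_max_right _ _)
      exact mul_le_mul_of_nonneg_right hCle hr.le

end Aux3

noncomputable section Aux4

variable {μ : Measure ℝ} {p : ℝ}

lemma lintegral_abs_sub_le {u : ℝ → ℝ} {Q : Set ℝ}
    (hu : AEMeasurable u (μ.restrict Q)) (a c : ℝ) :
    (∫⁻ t in Q, ENNReal.ofReal |u t - c| ∂μ) ≤
      (∫⁻ t in Q, ENNReal.ofReal |u t - a| ∂μ) + ENNReal.ofReal |a - c| * μ Q := by
  have hpt : ∀ t, ENNReal.ofReal |u t - c| ≤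
      ENNReal.ofReal |u t - a| + ENNReal.ofReal |a - c| := by
    intro t
    rw [← ENNReal.ofReal_add (abs_nonneg _) (abs_nonneg _)]
    exact ENNReal.ofReal_le_ofReal
      (by calc |u t - c| ≤ |u t - a| + |a - c| := abs_sub_le _ _ _)
  calc (∫⁻ t in Q, ENNReal.ofReal |u t - c| ∂μ)
      ≤ ∫⁻ t in Q, (ENNReal.ofReal |u t - a| + ENNReal.ofReal |a - c|) ∂μ :=
        lintegral_mono fun t => hpt t
    _ = (∫⁻ t in Q, ENNReal.ofReal |u t - a| ∂μ) + ∫⁻ _ in Q, ENNReal.ofReal |a - c| ∂μ :=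
        lintegral_add_left' (aem_ofReal_abs hu a) _
    _ = _ := by rw [setLIntegral_const]

lemma lhs_le_two_lintegral {u : ℝ → ℝ} {B : Set ℝ}
    (hu : IntegrableOn u B μ) (hB0 : μ B ≠ 0) (hBt : μ B ≠ ⊤) (c : ℝ) :
    (∫⁻ t in B, ENNReal.ofReal |u t - ⨍ s in B, u s ∂μ| ∂μ) ≤
      2 * ∫⁻ t in B, ENNReal.ofReal |u t - c| ∂μ := by
  calc (∫⁻ t in B, ENNReal.ofReal |u t - ⨍ s in B, u s ∂μ| ∂μ)
      ≤ (∫⁻ t in B, ENNReal.ofReal |u t - c| ∂μ) +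
          ENNReal.ofReal |c - ⨍ s in B, u s ∂μ| * μ B :=
        lintegral_abs_sub_le hu.aemeasurable c _
    _ ≤ (∫⁻ t in B, ENNReal.ofReal |u t - c| ∂μ) +
          ∫⁻ t in B, ENNReal.ofReal |u t - c| ∂μ := by
        apply add_le_add_right
        rw [abs_sub_comm]
        exact avg_sub_const_mul_measure_le hu hB0 hBt c
    _ = _ := (two_mul _).symm

lemma doubling_every_ball (hμ : IsMeasureOnR μ) (hloc : LocallyAdmissible μ p)
    (x₀ r₀ : ℝ) (hr₀ : 0 < r₀) : DoublingWithin μ (bI x₀ r₀) := by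
  obtain ⟨δ0, Cp, lam0, CD, hδ0, hCp, hlam0, hCDt, hmain⟩ :=
    cover_data hloc (x₀ - r₀) (x₀ + r₀) (by linarith)
  obtain ⟨m, hm0, hmt, hmlb⟩ :=
    uniform_lower_bound hμ (x₀ - r₀) (x₀ + r₀) δ0 (by linarith) hδ0
  set M := μ (bI x₀ (3*r₀)) with hM
  have hMt : M ≠ ⊤ := (measure_bI_lt_top hμ _ _).ne
  refine ⟨1 ⊔ CD ⊔ M/m, ?_, ?_, ?_⟩
  · exact lt_of_lt_of_le one_pos (le_sup_of_le_left le_sup_left)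
  · rw [sup_lt_iff, sup_lt_iff]
    exact ⟨⟨ENNReal.one_lt_top, hCDt⟩, ENNReal.div_lt_top hMt hm0.ne'⟩
  · intro x r hr hsub
    have hxx : x₀ - r₀ ≤ x - r ∧ x + r ≤ x₀ + r₀ :=
      (Ioo_subset_Ioo_iff (by linarith)).mp hsub
    have hx : x ∈ Icc (x₀ - r₀) (x₀ + r₀) := ⟨by linarith [hxx.1], by linarith [hxx.2]⟩
    rcases le_or_gt r δ0 with hsmall | hbig
    · calc μ (Ioo (x - 2*r) (x + 2*r)) ≤ CD * μ (Ioo (x-r) (x+r)) :=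
          (hmain x r hx hr hsmall).1
        _ ≤ (1 ⊔ CD ⊔ M/m) * μ (Ioo (x-r) (x+r)) :=
          mul_le_mul_left (le_sup_of_le_left le_sup_right) _
    · have h1 : μ (Ioo (x - 2*r) (x + 2*r)) ≤ M := by
        apply measure_mono
        have hrr₀ : r ≤ r₀ := by linarith [hxx.1, hxx.2]
        exact bI_subset_bI (by linarith [hxx.1]) (by linarith [hxx.2])
      have h2 : m ≤ μ (bI x r) := by
        refine le_trans (hmlb x hx) (measure_mono (bI_subset_bI ?_ ?_)) <;> linarith
      calc μ (Ioo (x - 2*r) (x + 2*r)) ≤ M := h1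
        _ = M/m * m := (ENNReal.div_mul_cancel hm0.ne' hmt).symm
        _ ≤ M/m * μ (Ioo (x-r) (x+r)) := mul_le_mul_right h2 _
        _ ≤ (1 ⊔ CD ⊔ M/m) * μ (Ioo (x-r) (x+r)) :=
          mul_le_mul_left le_sup_right _

end Aux4

noncomputable section Aux5

variable {μ : Measure ℝ} {p : ℝ}

set_option maxHeartbeats 1000000 in
lemma poincare_every_ball (hp : 1 ≤ p) (hμ : IsMeasureOnR μ) (hloc : LocallyAdmissible μ p)
    (x₀ r₀ : ℝ) (hr₀ : 0 < r₀) : PoincareWithin μ p (bI x₀ r₀) := by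
  have hp0 : 0 < p := lt_of_lt_of_le one_pos hp
  have hp0' : (0:ℝ) ≤ 1/p := by positivity
  obtain ⟨δ0, Cp, lam0, CD, hδ0, hCp, hlam0, hCDt, hmain⟩ :=
    cover_data hloc (x₀ - r₀) (x₀ + r₀) (by linarith)
  set δ := min δ0 r₀ with hδdef
  have hδ : 0 < δ := lt_min hδ0 hr₀
  have hδδ0 : δ ≤ δ0 := min_le_left _ _
  have hδr₀ : δ ≤ r₀ := min_le_right _ _
  set Λ := lam0 + 2 with hΛdef
  have hΛ1 : 1 ≤ Λ := by rw [hΛdef]; linarith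
  have hΛlam0 : lam0 ≤ Λ := by rw [hΛdef]; linarith
  have hΛlam1 : lam0 + 1 ≤ Λ := by rw [hΛdef]; linarith
  have hΛpos : 0 < Λ := by linarith
  have hΛ2pos : 0 < (Λ+2)*r₀ := mul_pos (by linarith) hr₀
  obtain ⟨CdJ, hCdJ0, hCdJt, hDJ⟩ := doubling_every_ball hμ hloc x₀ ((Λ+2)*r₀) hΛ2pos
  obtain ⟨k, hk⟩ : ∃ k : ℕ, Λ ≤ (2:ℝ)^k := by
    obtain ⟨k, hk⟩ := pow_unbounded_of_one_lt Λ (by norm_num : (1:ℝ) < 2)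
    exact ⟨k, hk.le⟩
  set D : ℝ≥0∞ := CdJ ^ k with hDdef
  have hD0 : D ≠ 0 := pow_ne_zero _ hCdJ0.ne'
  have hDt : D ≠ ⊤ := (ENNReal.pow_lt_top hCdJt).ne
  obtain ⟨m, hm0, hmt, hmlb⟩ :=
    uniform_lower_bound hμ (x₀ - r₀) (x₀ + r₀) (δ/3) (by linarith) (by positivity)
  set MM := μ (bI x₀ ((Λ+2)*r₀)) with hMMdef
  have hMM0 : MM ≠ 0 := (measure_bI_pos hμ hΛ2pos).ne'
  have hMMt : MM ≠ ⊤ := (measure_bI_lt_top hμ _ _).ne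
  set E' : ℝ≥0∞ := MM / m with hE'def
  have hE'0 : E' ≠ 0 := (ENNReal.div_pos hMM0 hmt).ne'
  have hE't : E' ≠ ⊤ := (ENNReal.div_lt_top hMMt hm0.ne').ne
  have hE'pt : E' ^ (1/p) ≠ ⊤ := ENNReal.rpow_ne_top_of_nonneg hp0' hE't
  set G₁ : ℝ≥0∞ := MM * ENNReal.ofReal (Cp*δ) * E' ^ (1/p) with hG₁def
  have hG₁t : G₁ ≠ ⊤ :=
    ENNReal.mul_ne_top (ENNReal.mul_ne_top hMMt ENNReal.ofReal_ne_top) hE'pt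
  set N₀ : ℕ := Nat.ceil (2*r₀/δ) + 1 with hN₀def
  set Gc : ℝ≥0∞ := 2 * ((N₀:ℝ≥0∞) * (G₁ + (N₀:ℝ≥0∞)*(2*G₁*m⁻¹)*MM)) * m⁻¹ with hGcdef
  have hminvt : m⁻¹ ≠ ⊤ := ENNReal.inv_ne_top.mpr hm0.ne'
  have hGct : Gc ≠ ⊤ := by
    apply ENNReal.mul_ne_top
    apply ENNReal.mul_ne_top (by norm_num)
    apply ENNReal.mul_ne_top (ENNReal.natCast_ne_top _)
    rw [ENNReal.add_ne_top]
    refine ⟨hG₁t, ?_⟩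
    apply ENNReal.mul_ne_top
    apply ENNReal.mul_ne_top (ENNReal.natCast_ne_top _)
    · exact ENNReal.mul_ne_top (ENNReal.mul_ne_top (by norm_num) hG₁t) hminvt
    · exact hMMt
    · exact hminvt
  set D1 : ℝ := (D ^ (1/p)).toReal + 1 with hD1def
  have hD1 : D ^ (1/p) ≤ ENNReal.ofReal D1 := by
    rw [hD1def]
    conv_lhs => rw [← ENNReal.ofReal_toReal (ENNReal.rpow_ne_top_of_nonneg hp0' hDt)]
    exact ENNReal.ofReal_le_ofReal (by linarith)
  have hD1pos : 0 < D1 := by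
    have := ENNReal.toReal_nonneg (a := D ^ (1/p))
    rw [hD1def]; linarith
  set C := max (Cp * D1) ((Gc.toReal + 1)/δ) with hCdef
  have hC0 : 0 < C := lt_max_of_lt_left (by positivity)
  refine ⟨C, hC0, Λ, hΛ1, ?_⟩
  intro x r hr hsub u g hu hg
  have hxx := (Ioo_subset_Ioo_iff (by linarith : x - r < x + r)).mp hsub
  have hxx1 : x₀ - r₀ ≤ x - r := hxx.1
  have hxx2 : x + r ≤ x₀ + r₀ := hxx.2
  have hx : x ∈ Icc (x₀-r₀) (x₀+r₀) := ⟨by linarith, by linarith⟩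
  have hrr₀ : r ≤ r₀ := by linarith
  have hΛrr : Λ*r ≤ Λ*r₀ := mul_le_mul_of_nonneg_left hrr₀ (by linarith)
  have hΛr0 : 0 < Λ*r := mul_pos hΛpos hr
  have hrΛr : r ≤ Λ*r := le_mul_of_one_le_left hr.le hΛ1
  have hΛBsubJ : bI x (Λ*r) ⊆ bI x₀ ((Λ+2)*r₀) := by
    have h2 : (Λ+2)*r₀ = Λ*r₀ + 2*r₀ := by ring
    apply bI_subset_bI <;> linarith
  have hΛBMM : μ (bI x (Λ*r)) ≤ MM := measure_mono hΛBsubJ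
  have hΛB0 : μ (bI x (Λ*r)) ≠ 0 := (measure_bI_pos hμ hΛr0).ne'
  have hΛBt : μ (bI x (Λ*r)) ≠ ⊤ := (measure_bI_lt_top hμ _ _).ne
  have hB0 : μ (bI x r) ≠ 0 := (measure_bI_pos hμ hr).ne'
  have hBt : μ (bI x r) ≠ ⊤ := (measure_bI_lt_top hμ _ _).ne
  have hBsubΛ : bI x r ⊆ bI x (Λ*r) :=
    bI_subset_bI (by linarith) (by linarith)
  set RHS := PoinRHS μ (fun t => ENNReal.ofReal (g t)) p (bI x (Λ*r)) with hRHSdef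
  show PoinLHS μ u (bI x r) ≤ ENNReal.ofReal (C * r) * RHS
  rcases le_or_gt r δ with hsmall | hbig
  · -- small-ball case
    have hsub1 : bI x (lam0 * r) ⊆ bI x (Λ * r) := by
      have h1 : lam0 * r ≤ Λ * r := mul_le_mul_of_nonneg_right hΛlam0 hr.le
      exact bI_subset_bI (by linarith) (by linarith)
    obtain ⟨lam, hlam1, hlamle, hP⟩ :=
      (hmain x r hx hr (hsmall.trans hδδ0)).2 u g (hu.mono_set hsub1) (hg.mono hsub1)
    have hlamr : bI x (lam * r) ⊆ bI x (Λ * r) := by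
      have h1 : lam * r ≤ Λ * r := mul_le_mul_of_nonneg_right (hlamle.trans hΛlam0) hr.le
      exact bI_subset_bI (by linarith) (by linarith)
    have hDcmp : μ (bI x (Λ*r)) ≤ D * μ (bI x (lam*r)) := by
      calc μ (bI x (Λ*r)) ≤ D * μ (bI x r) := doubling_iter hDJ hr hΛ1 hΛBsubJ hk
        _ ≤ D * μ (bI x (lam*r)) := by
            apply mul_le_mul_right
            apply measure_mono
            have h1 : r ≤ lam * r := le_mul_of_one_le_left hr.le hlam1
            exact bI_subset_bI (by linarith) (by linarith)
    have hlam0' : μ (bI x (lam*r)) ≠ 0 :=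
      (measure_bI_pos hμ (mul_pos (by linarith) hr)).ne'
    have hcmp : PoinRHS μ (fun t => ENNReal.ofReal (g t)) p (bI x (lam*r)) ≤
        D^(1/p) * RHS :=
      poinRHS_comp hp0 hlamr hD0 hDt hlam0' hΛBt hDcmp
    calc PoinLHS μ u (bI x r)
        ≤ ENNReal.ofReal (Cp * r) *
            PoinRHS μ (fun t => ENNReal.ofReal (g t)) p (bI x (lam*r)) := hP
      _ ≤ ENNReal.ofReal (Cp * r) * (D^(1/p) * RHS) := mul_le_mul_right hcmp _
      _ = (ENNReal.ofReal (Cp * r) * D^(1/p)) * RHS := by ring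
      _ ≤ ENNReal.ofReal (C * r) * RHS := by
          apply mul_le_mul_left
          calc ENNReal.ofReal (Cp*r) * D^(1/p)
              ≤ ENNReal.ofReal (Cp*r) * ENNReal.ofReal D1 := mul_le_mul_right hD1 _
            _ = ENNReal.ofReal (Cp*r*D1) := (ENNReal.ofReal_mul (by positivity)).symm
            _ ≤ ENNReal.ofReal (C*r) := by
                apply ENNReal.ofReal_le_ofReal
                have h1 : Cp * D1 ≤ C := le_max_left _ _
                calc Cp * r * D1 = (Cp * D1) * r := by ring
                  _ ≤ C * r := mul_le_mul_of_nonneg_right h1 hr.le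
  · -- chain case
    set N : ℕ := Nat.ceil (2*r/δ) with hNdef
    have hNpos : 0 < N := Nat.ceil_pos.mpr (by positivity)
    have hN0' : (0:ℝ) < N := by exact_mod_cast hNpos
    have hNge : 2*r/δ ≤ (N:ℝ) := Nat.le_ceil _
    have hNle : (N:ℝ) ≤ 3*r/δ := by
      have h1 : ((N:ℝ)) < 2*r/δ + 1 := Nat.ceil_lt_add_one (by positivity)
      have h2 : (1:ℝ) ≤ r/δ := (one_le_div hδ).mpr hbig.le
      have h3 : 2*r/δ + r/δ = 3*r/δ := by ring
      linarith
    have hNN₀ : N ≤ N₀ := by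
      rw [hN₀def]
      refine le_trans (Nat.ceil_le_ceil ?_) (Nat.le_succ _)
      gcongr
    set ρ : ℝ := r / N with hρdef
    have hρ : 0 < ρ := div_pos hr hN0'
    have hNρ : (N:ℝ) * ρ = r := by rw [hρdef]; field_simp
    have hρδ : 2*ρ ≤ δ := by
      have h1 : 2*r ≤ (N:ℝ)*δ := by
        have := (div_le_iff₀ hδ).mp hNge
        linarith
      rw [hρdef, mul_div_assoc']
      rw [div_le_iff₀ hN0']
      linarith [mul_comm (N:ℝ) δ]
    have hρδ3 : δ/3 ≤ ρ := by
      have h1 : (N:ℝ)*δ ≤ 3*r := by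
        have := (le_div_iff₀ hδ).mp hNle
        linarith
      rw [hρdef, div_le_div_iff₀ (by norm_num) hN0']
      linarith [mul_comm δ (N:ℝ)]
    have hN1' : (1:ℝ) ≤ (N:ℝ) := by exact_mod_cast hNpos
    have hρr : ρ ≤ r := by
      rw [hρdef, div_le_iff₀ hN0']
      nlinarith
    set cc : ℕ → ℝ := fun k => x - r + (2*(k:ℝ)+1)*ρ with hccdef
    set Q : ℕ → Set ℝ := fun k => bI (cc k) (2*ρ) with hQdef
    set aa : ℕ → ℝ := fun k => ⨍ s in Q k, u s ∂μ with haadef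
    have hccmem : ∀ k, k < N → x - r + ρ ≤ cc k ∧ cc k ≤ x + r - ρ := by
      intro k hk
      have hk1 : (k:ℝ) + 1 ≤ (N:ℝ) := by exact_mod_cast hk
      have hk0 : (0:ℝ) ≤ (k:ℝ) := Nat.cast_nonneg _
      constructor
      · have : ρ ≤ (2*(k:ℝ)+1)*ρ := le_mul_of_one_le_left hρ.le (by linarith)
        simp only [hccdef]; linarith
      · have h5 : (2*(k:ℝ)+1) ≤ 2*(N:ℝ) - 1 := by linarith
        have h6 : (2*(k:ℝ)+1)*ρ ≤ (2*(N:ℝ)-1)*ρ := mul_le_mul_of_nonneg_right h5 hρ.le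
        have h7 : (2*(N:ℝ)-1)*ρ = 2*r - ρ := by rw [← hNρ]; ring
        simp only [hccdef]; linarith
    have hQsubΛ : ∀ k, k < N → ∀ lam' : ℝ, 0 ≤ lam' → lam' ≤ lam0 →
        bI (cc k) (lam' * (2*ρ)) ⊆ bI x (Λ*r) := by
      intro k hk lam' h0 hle
      obtain ⟨hc1, hc2⟩ := hccmem k hk
      have h1 : lam' * (2*ρ) ≤ lam0 * r := by
        have : lam' * (2*ρ) ≤ lam0 * (2*ρ) := mul_le_mul_of_nonneg_right hle (by linarith)
        have h2 : lam0 * (2*ρ) ≤ lam0 * δ := mul_le_mul_of_nonneg_left hρδ (by linarith)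
        have h3 : lam0 * δ ≤ lam0 * r := mul_le_mul_of_nonneg_left (by linarith) (by linarith)
        linarith
      have hΛr : Λ * r = lam0 * r + 2*r := by rw [hΛdef]; ring
      apply bI_subset_bI <;> linarith
    have hQsubΛB : ∀ k, k < N → Q k ⊆ bI x (Λ*r) := by
      intro k hk
      have := hQsubΛ k hk 1 (by norm_num) (by linarith)
      rwa [one_mul] at this
    have hccK : ∀ k, k < N → cc k ∈ Icc (x₀-r₀) (x₀+r₀) := by
      intro k hk
      obtain ⟨hc1, hc2⟩ := hccmem k hk
      exact ⟨by linarith, by linarith⟩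
    have hQm : ∀ k, k < N → m ≤ μ (Q k) := by
      intro k hk
      refine le_trans (hmlb (cc k) (hccK k hk)) (measure_mono (bI_subset_bI ?_ ?_)) <;>
        linarith
    have hQMM : ∀ k, k < N → μ (Q k) ≤ MM := fun k hk =>
      measure_mono ((hQsubΛB k hk).trans hΛBsubJ)
    have hQ0 : ∀ k, k < N → μ (Q k) ≠ 0 := fun k hk =>
      (lt_of_lt_of_le hm0 (hQm k hk)).ne'
    have hQt : ∀ k, k < N → μ (Q k) ≠ ⊤ := fun k hk => (measure_bI_lt_top hμ _ _).ne
    set E : ℕ → ℝ≥0∞ := fun k => ∫⁻ t in Q k, ENNReal.ofReal |u t - aa k| ∂μ with hEdef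
    have hEk : ∀ k, k < N → E k ≤ G₁ * RHS := by
      intro k hk
      have h2ρ : 0 < 2*ρ := by linarith
      obtain ⟨lam, hlam1, hlamle, hP⟩ :=
        (hmain (cc k) (2*ρ) (hccK k hk) h2ρ (le_trans hρδ hδδ0)).2 u g
          (hu.mono_set (hQsubΛ k hk lam0 (by linarith) le_rfl))
          (hg.mono (hQsubΛ k hk lam0 (by linarith) le_rfl))
      have hS'sub : bI (cc k) (lam * (2*ρ)) ⊆ bI x (Λ*r) :=
        hQsubΛ k hk lam (by linarith) hlamle
      have hS'm : m ≤ μ (bI (cc k) (lam * (2*ρ))) := by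
        refine le_trans (hmlb (cc k) (hccK k hk)) (measure_mono (bI_subset_bI ?_ ?_))
        · have h9 : 2*ρ ≤ lam * (2*ρ) := le_mul_of_one_le_left (by linarith) hlam1
          linarith
        · have h9 : 2*ρ ≤ lam * (2*ρ) := le_mul_of_one_le_left (by linarith) hlam1
          linarith
      have hS'0 : μ (bI (cc k) (lam * (2*ρ))) ≠ 0 := (lt_of_lt_of_le hm0 hS'm).ne'
      have hEcmp : μ (bI x (Λ*r)) ≤ E' * μ (bI (cc k) (lam * (2*ρ))) := by
        calc μ (bI x (Λ*r)) ≤ MM := hΛBMM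
          _ = MM/m * m := (ENNReal.div_mul_cancel hm0.ne' hmt).symm
          _ ≤ E' * μ (bI (cc k) (lam * (2*ρ))) := mul_le_mul_right hS'm _
      have hcmp : PoinRHS μ (fun t => ENNReal.ofReal (g t)) p (bI (cc k) (lam * (2*ρ))) ≤
          E'^(1/p) * RHS :=
        poinRHS_comp hp0 hS'sub hE'0 hE't hS'0 hΛBt hEcmp
      calc E k ≤ (ENNReal.ofReal (Cp * (2*ρ)) *
            PoinRHS μ (fun t => ENNReal.ofReal (g t)) p (bI (cc k) (lam * (2*ρ)))) *
              μ (Q k) :=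
            lintegral_le_of_poinLHS hP (hQ0 k hk) (hQt k hk)
        _ ≤ (ENNReal.ofReal (Cp * δ) * (E'^(1/p) * RHS)) * MM := by
            refine mul_le_mul' (mul_le_mul' (ENNReal.ofReal_le_ofReal ?_) hcmp) (hQMM k hk)
            exact mul_le_mul_of_nonneg_left hρδ hCp.le
        _ = G₁ * RHS := by rw [hG₁def]; ring
    set L : ℝ≥0∞ := 2 * (G₁ * RHS) * m⁻¹ with hLdef
    have hlink : ∀ k, k+1 < N → ENNReal.ofReal |aa (k+1) - aa k| ≤ L := by
      intro k hk1
      have hkN : k < N := Nat.lt_of_succ_lt hk1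
      set P := bI (cc k + ρ) ρ with hPdef
      have hcsucc : cc (k+1) = cc k + 2*ρ := by
        simp only [hccdef]; push_cast; ring
      have hPQ1 : P ⊆ Q k := by
        simp only [hPdef, hQdef]
        exact bI_subset_bI (by linarith) (by linarith)
      have hPQ2 : P ⊆ Q (k+1) := by
        simp only [hPdef, hQdef, hcsucc]
        exact bI_subset_bI (by linarith) (by linarith)
      have hPm' : m ≤ μ P := by
        obtain ⟨hc1, hc2⟩ := hccmem k hkN
        refine le_trans (hmlb (cc k + ρ) ⟨by linarith, by linarith⟩)
          (measure_mono (bI_subset_bI ?_ ?_)) <;> linarith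
      have hprim := prim_abs_mul_measure_le (μ := μ) (P := P)
        ((hu.mono_set ((hPQ1).trans (hQsubΛB k hkN))).aemeasurable) (aa (k+1)) (aa k)
      have h1 : (∫⁻ t in P, ENNReal.ofReal |u t - aa (k+1)| ∂μ) ≤ E (k+1) :=
        lintegral_mono' (Measure.restrict_mono hPQ2 le_rfl) le_rfl
      have h2 : (∫⁻ t in P, ENNReal.ofReal |u t - aa k| ∂μ) ≤ E k :=
        lintegral_mono' (Measure.restrict_mono hPQ1 le_rfl) le_rfl
      have hXm : ENNReal.ofReal |aa (k+1) - aa k| * m ≤ 2 * (G₁ * RHS) := by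
        calc ENNReal.ofReal |aa (k+1) - aa k| * m
            ≤ ENNReal.ofReal |aa (k+1) - aa k| * μ P := mul_le_mul_right hPm' _
          _ ≤ E (k+1) + E k := le_trans hprim (add_le_add h1 h2)
          _ ≤ G₁*RHS + G₁*RHS := add_le_add (hEk (k+1) hk1) (hEk k hkN)
          _ = 2*(G₁*RHS) := (two_mul _).symm
      calc ENNReal.ofReal |aa (k+1) - aa k|
          = ENNReal.ofReal |aa (k+1) - aa k| * m * m⁻¹ := by
            rw [mul_assoc, ENNReal.mul_inv_cancel hm0.ne' hmt, mul_one]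
        _ ≤ 2*(G₁*RHS) * m⁻¹ := mul_le_mul_left hXm _
        _ = L := by rw [hLdef]
    have hchain : ∀ k, k < N → ENNReal.ofReal |aa k - aa 0| ≤ (N:ℝ≥0∞) * L := by
      have key : ∀ k, k < N → ENNReal.ofReal |aa k - aa 0| ≤ (k:ℝ≥0∞) * L := by
        intro k
        induction k with
        | zero => intro _; simp
        | succ k ih =>
          intro hk
          have h1 := hlink k hk
          have h2 := ih (Nat.lt_of_succ_lt hk)
          calc ENNReal.ofReal |aa (k+1) - aa 0|
              ≤ ENNReal.ofReal (|aa (k+1) - aa k| + |aa k - aa 0|) :=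
                ENNReal.ofReal_le_ofReal (abs_sub_le _ _ _)
            _ = ENNReal.ofReal |aa (k+1) - aa k| + ENNReal.ofReal |aa k - aa 0| :=
                ENNReal.ofReal_add (abs_nonneg _) (abs_nonneg _)
            _ ≤ L + (k:ℝ≥0∞) * L := add_le_add h1 h2
            _ = ((k:ℝ≥0∞)+1) * L := by ring
            _ = (((k+1):ℕ):ℝ≥0∞) * L := by push_cast; ring
      intro k hk
      refine le_trans (key k hk) (mul_le_mul_left ?_ _)
      exact_mod_cast Nat.le_of_lt hk
    have hcover : bI x r ⊆ ⋃ k : Fin N, Icc (cc k.1 - ρ) (cc k.1 + ρ) := by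
      intro t ht
      obtain ⟨ht1, ht2⟩ := ht
      have hnn : 0 ≤ (t - (x - r))/(2*ρ) := by
        apply div_nonneg _ (by linarith)
        linarith
      set j := ⌊(t - (x - r))/(2*ρ)⌋₊ with hjdef
      have hjN : j < N := by
        rw [hjdef, Nat.floor_lt hnn, div_lt_iff₀ (by linarith)]
        have hNr : (N:ℝ)*(2*ρ) = 2*r := by rw [mul_comm 2 ρ, ← mul_assoc, hNρ]; ring
        linarith
      have hfl : (j:ℝ)*(2*ρ) ≤ t - (x-r) := by
        have := Nat.floor_le hnn
        rw [← hjdef] at this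
        calc (j:ℝ)*(2*ρ) ≤ ((t - (x - r))/(2*ρ))*(2*ρ) :=
              mul_le_mul_of_nonneg_right this (by linarith)
          _ = t - (x-r) := by field_simp
      have hfl2 : t - (x-r) < ((j:ℝ)+1)*(2*ρ) := by
        have := Nat.lt_floor_add_one ((t - (x - r))/(2*ρ))
        rw [← hjdef] at this
        calc t - (x-r) = ((t - (x - r))/(2*ρ))*(2*ρ) := by field_simp
          _ < ((j:ℝ)+1)*(2*ρ) := by
              apply mul_lt_mul_of_pos_right this (by linarith)
      have e1 : (2*(j:ℝ)+1)*ρ - ρ = (j:ℝ)*(2*ρ) := by ring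
      have e2 : (2*(j:ℝ)+1)*ρ + ρ = ((j:ℝ)+1)*(2*ρ) := by ring
      refine mem_iUnion.2 ⟨⟨j, hjN⟩, ?_, ?_⟩
      · simp only [hccdef]
        linarith
      · simp only [hccdef]
        linarith
    have hBm : m ≤ μ (bI x r) := by
      refine le_trans (hmlb x hx) (measure_mono (bI_subset_bI ?_ ?_)) <;> linarith
    have hperk : ∀ k : Fin N,
        (∫⁻ t in Icc (cc k.1 - ρ) (cc k.1 + ρ), ENNReal.ofReal |u t - aa 0| ∂μ) ≤
          G₁*RHS + ((N:ℝ≥0∞)*L) * MM := by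
      intro k
      have hIccQ : Icc (cc k.1 - ρ) (cc k.1 + ρ) ⊆ Q k.1 := by
        intro t ⟨h1, h2⟩
        exact ⟨by linarith, by linarith⟩
      calc (∫⁻ t in Icc (cc k.1 - ρ) (cc k.1 + ρ), ENNReal.ofReal |u t - aa 0| ∂μ)
          ≤ ∫⁻ t in Q k.1, ENNReal.ofReal |u t - aa 0| ∂μ :=
            lintegral_mono' (Measure.restrict_mono hIccQ le_rfl) le_rfl
        _ ≤ (∫⁻ t in Q k.1, ENNReal.ofReal |u t - aa k.1| ∂μ) +
              ENNReal.ofReal |aa k.1 - aa 0| * μ (Q k.1) :=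
            lintegral_abs_sub_le ((hu.mono_set (hQsubΛB k.1 k.2)).aemeasurable) _ _
        _ ≤ G₁*RHS + ((N:ℝ≥0∞)*L) * MM :=
            add_le_add (hEk k.1 k.2) (mul_le_mul' (hchain k.1 k.2) (hQMM k.1 k.2))
    have hIbound : (∫⁻ t in bI x r, ENNReal.ofReal |u t - ⨍ s in bI x r, u s ∂μ| ∂μ) ≤
        2 * ((N:ℝ≥0∞) * (G₁*RHS + ((N:ℝ≥0∞)*L) * MM)) := by
      calc (∫⁻ t in bI x r, ENNReal.ofReal |u t - ⨍ s in bI x r, u s ∂μ| ∂μ)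
          ≤ 2 * ∫⁻ t in bI x r, ENNReal.ofReal |u t - aa 0| ∂μ :=
            lhs_le_two_lintegral (hu.mono_set hBsubΛ) hB0 hBt (aa 0)
        _ ≤ 2 * ((N:ℝ≥0∞) * (G₁*RHS + ((N:ℝ≥0∞)*L) * MM)) := by
            apply mul_le_mul_right
            calc (∫⁻ t in bI x r, ENNReal.ofReal |u t - aa 0| ∂μ)
                ≤ ∫⁻ t in ⋃ k : Fin N, Icc (cc k.1 - ρ) (cc k.1 + ρ),
                    ENNReal.ofReal |u t - aa 0| ∂μ :=
                  lintegral_mono' (Measure.restrict_mono hcover le_rfl) le_rfl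
              _ ≤ ∑' k : Fin N, ∫⁻ t in Icc (cc k.1 - ρ) (cc k.1 + ρ),
                    ENNReal.ofReal |u t - aa 0| ∂μ :=
                  lintegral_iUnion_le _ _
              _ = ∑ k : Fin N, ∫⁻ t in Icc (cc k.1 - ρ) (cc k.1 + ρ),
                    ENNReal.ofReal |u t - aa 0| ∂μ := tsum_fintype _
              _ ≤ ∑ _k : Fin N, (G₁*RHS + ((N:ℝ≥0∞)*L) * MM) :=
                  Finset.sum_le_sum (fun k _ => hperk k)
              _ = (N:ℝ≥0∞) * (G₁*RHS + ((N:ℝ≥0∞)*L)*MM) := by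
                  rw [Finset.sum_const, Finset.card_univ, Fintype.card_fin, nsmul_eq_mul]
    have hPoinLHS : PoinLHS μ u (bI x r) ≤
        (2 * ((N:ℝ≥0∞) * (G₁*RHS + ((N:ℝ≥0∞)*L) * MM))) * m⁻¹ := by
      calc PoinLHS μ u (bI x r)
          ≤ (∫⁻ t in bI x r, ENNReal.ofReal |u t - ⨍ s in bI x r, u s ∂μ| ∂μ) / m :=
            ENNReal.div_le_div_left hBm _
        _ = (∫⁻ t in bI x r, ENNReal.ofReal |u t - ⨍ s in bI x r, u s ∂μ| ∂μ) * m⁻¹ :=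
            div_eq_mul_inv _ _
        _ ≤ _ := mul_le_mul_left hIbound _
    have hN₀c : (N:ℝ≥0∞) ≤ (N₀:ℝ≥0∞) := Nat.cast_le.mpr hNN₀
    have hfinal : (2 * ((N:ℝ≥0∞) * (G₁*RHS + ((N:ℝ≥0∞)*L) * MM))) * m⁻¹ ≤ Gc * RHS := by
      calc (2 * ((N:ℝ≥0∞) * (G₁*RHS + ((N:ℝ≥0∞)*L) * MM))) * m⁻¹
          = (2 * ((N:ℝ≥0∞) * (G₁ + (N:ℝ≥0∞)*(2*G₁*m⁻¹)*MM)) * m⁻¹) * RHS := by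
            rw [hLdef]; ring
        _ ≤ (2 * ((N₀:ℝ≥0∞) * (G₁ + (N₀:ℝ≥0∞)*(2*G₁*m⁻¹)*MM)) * m⁻¹) * RHS := by
            gcongr
        _ = Gc * RHS := by rw [hGcdef]
    have hGcC : Gc ≤ ENNReal.ofReal (C * r) := by
      have hGcle : Gc ≤ ENNReal.ofReal (Gc.toReal + 1) := by
        conv_lhs => rw [← ENNReal.ofReal_toReal hGct]
        exact ENNReal.ofReal_le_ofReal (by linarith)
      refine le_trans hGcle (ENNReal.ofReal_le_ofReal ?_)
      have h1 : (Gc.toReal + 1)/δ ≤ C := le_max_right _ _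
      have h2 : Gc.toReal + 1 ≤ C * δ := by
        rw [div_le_iff₀ hδ] at h1
        linarith
      have h3 : C * δ ≤ C * r := mul_le_mul_of_nonneg_left hbig.le hC0.le
      linarith
    exact le_trans hPoinLHS (le_trans hfinal (mul_le_mul_left hGcC _))

end Aux5

/-- `μ` is locally `p`-admissible iff it is semilocally
`p`-admissible, i.e. `p`-admissible within every ball of ℝ. -/
theorem locally_admissible_iff_semilocally_admissible (p : ℝ) (hp : 1 ≤ p)
    (μ : Measure ℝ) (hμ : IsMeasureOnR μ) :
    LocallyAdmissible μ p ↔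
      ∀ x r : ℝ, 0 < r → AdmissibleWithin μ p (Ioo (x - r) (x + r)) := by
  constructor
  · intro hloc x r hr
    exact ⟨doubling_every_ball hμ hloc x r hr, poincare_every_ball hp hμ hloc x r hr⟩
  · intro h x
    exact ⟨1, one_pos, h x 1 one_pos⟩
end

section
/- Let 1 ≤ p < ∞ and let μ be a measure on ℝ. Assume that I ⊂ ℝ is a bounded open interval such that the p-Poincaré inequality holds for the single ball B = I with dilation constant λ ≥ 1 and constant C_PI, i.e., for all μ-integrable functions u on λI and all upper gradients g of u on λI, ⨍_I |u − u_I| dμ ≤ C_PI r_I (⨍_{λI} g^p dμ)^{1/p}. Then the same inequality also holds for B = I with dilation constant 1 and the same constant C_PI, i.e., ⨍_I |u − u_I| dμ ≤ C_PI r_I (⨍_I g^p dμ)^{1/p} for all μ-integrable u on I and all upper gradients g of u on I. -/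
open MeasureTheory Set Filter
open scoped ENNReal NNReal Topology

/-- Proposition 3.2: if the `p`-Poincaré inequality holds
for a fixed bounded open interval `I` with dilation constant `lam ≥ 1` and
constant `CPI`, then it also holds for `I` with dilation constant `1` and the
same constant `CPI`. -/
theorem poincare_dilation_one (p : ℝ) (hp : 1 ≤ p) (μ : Measure ℝ)
    (hμ : IsMeasureOnR μ) (x₀ r₀ CPI lam : ℝ) (hr₀ : 0 < r₀)
    (hCPI : 0 < CPI) (hlam : 1 ≤ lam)
    (h : ∀ u g : ℝ → ℝ,
      IntegrableOn u (Ioo (x₀ - lam*r₀) (x₀ + lam*r₀)) μ →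
      IsUpperGradientOn g u (Ioo (x₀ - lam*r₀) (x₀ + lam*r₀)) →
      PoinLHS μ u (Ioo (x₀ - r₀) (x₀ + r₀)) ≤
        ENNReal.ofReal (CPI * r₀) *
          PoinRHS μ (fun t => ENNReal.ofReal (g t)) p
            (Ioo (x₀ - lam*r₀) (x₀ + lam*r₀))) :
    ∀ u g : ℝ → ℝ,
      IntegrableOn u (Ioo (x₀ - r₀) (x₀ + r₀)) μ →
      IsUpperGradientOn g u (Ioo (x₀ - r₀) (x₀ + r₀)) →
      PoinLHS μ u (Ioo (x₀ - r₀) (x₀ + r₀)) ≤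
        ENNReal.ofReal (CPI * r₀) *
          PoinRHS μ (fun t => ENNReal.ofReal (g t)) p
            (Ioo (x₀ - r₀) (x₀ + r₀)) := by
  intro u g hu hg
  obtain ⟨hgnn, hgm, hug⟩ := hg
  set L : ℝ := x₀ - r₀ with hLdef
  set R : ℝ := x₀ + r₀ with hRdef
  set L' : ℝ := x₀ - lam * r₀ with hL'def
  set R' : ℝ := x₀ + lam * r₀ with hR'def
  have hrlam : r₀ ≤ lam * r₀ := by nlinarith
  have hLR : L < R := by simp only [hLdef, hRdef]; linarith
  have hL'L : L' ≤ L := by simp only [hLdef, hL'def]; linarith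
  have hRR' : R ≤ R' := by simp only [hRdef, hR'def]; linarith
  have hL'R' : L' < R' := lt_of_le_of_lt hL'L (lt_of_lt_of_le hLR hRR')
  have hsubI : Ioo L R ⊆ Ioo L' R' := Ioo_subset_Ioo hL'L hRR'
  set ν : Measure ℝ := volume.withDensity (fun t => ENNReal.ofReal (g t)) with hνdef
  have hν : ∀ s : Set ℝ, MeasurableSet s → ν s = ∫⁻ t in s, ENNReal.ofReal (g t) :=
    fun s hs => withDensity_apply _ hs
  have hug' : ∀ a b : ℝ, a ≤ b → Icc a b ⊆ Ioo L R →
      ENNReal.ofReal |u b - u a| ≤ ν (Icc a b) := by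
    intro a b hab hsub
    rw [hν _ measurableSet_Icc]
    exact hug a b hab hsub
  -- Cauchy/limit lemma near the left endpoint
  have hFLne : (𝓝[Ioo L R] L).NeBot := by
    apply mem_closure_iff_nhdsWithin_neBot.mp
    rw [closure_Ioo hLR.ne]
    exact ⟨le_refl _, hLR.le⟩
  have hFRne : (𝓝[Ioo L R] R).NeBot := by
    apply mem_closure_iff_nhdsWithin_neBot.mp
    rw [closure_Ioo hLR.ne]
    exact ⟨hLR.le, le_refl _⟩
  set vL : ℝ := limUnder (𝓝[Ioo L R] L) u with hvLdef
  set vR : ℝ := limUnder (𝓝[Ioo L R] R) u with hvRdef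
  -- small measure near the endpoints
  have hsmallL : ∀ c : ℝ, c ∈ Ioo L R → ν (Ioc L c) ≠ ⊤ → ∀ ε : ℝ, 0 < ε →
      ∃ δ : ℝ, 0 < δ ∧ δ ≤ c - L ∧ ν (Ioc L (L + δ)) < ENNReal.ofReal ε := by
    intro c hc hfin ε hε
    have hcL : 0 < c - L := by linarith [hc.1]
    set s : ℕ → Set ℝ := fun n => Ioc L (L + (c - L) * (1 / (n + 1))) with hsdef
    have hanti : Antitone s := by
      intro n m hnm
      apply Ioc_subset_Ioc_right
      have h1 : (1 : ℝ) / (m + 1) ≤ 1 / (n + 1) := by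
        apply one_div_le_one_div_of_le (by positivity)
        exact_mod_cast Nat.succ_le_succ hnm
      nlinarith
    have hiInter : ⋂ n, s n = ∅ := by
      ext x
      simp only [mem_iInter, mem_empty_iff_false, iff_false]
      intro hx
      have hxL : L < x := (hx 0).1
      have hxle : ∀ n : ℕ, x - L ≤ (c - L) * (1 / (n + 1)) := by
        intro n; have := (hx n).2; linarith
      have htend : Tendsto (fun n : ℕ => (c - L) * (1 / (n + 1))) atTop (𝓝 0) := by
        simpa using tendsto_one_div_add_atTop_nhds_zero_nat.const_mul (c - L)
      have := ge_of_tendsto htend (Filter.Eventually.of_forall hxle)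
      linarith
    have hs0 : ν (s 0) ≠ ⊤ := by
      have : s 0 = Ioc L c := by
        simp only [hsdef]; norm_num
      rw [this]; exact hfin
    have htend : Tendsto (ν ∘ s) atTop (𝓝 (ν (⋂ n, s n))) :=
      tendsto_measure_iInter_atTop (fun n => measurableSet_Ioc.nullMeasurableSet)
        hanti ⟨0, hs0⟩
    rw [hiInter, measure_empty] at htend
    have hev : ∀ᶠ n in atTop, ν (s n) < ENNReal.ofReal ε :=
      htend.eventually (Filter.Tendsto.eventually_lt_const (by simpa using ENNReal.ofReal_pos.2 hε)
        tendsto_id) |>.mono (fun n h => h)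
    obtain ⟨n, hn⟩ := hev.exists
    refine ⟨(c - L) * (1 / (n + 1)), by positivity, ?_, hn⟩
    have h1 : (1 : ℝ) / (n + 1) ≤ 1 := by
      apply div_le_one_of_le₀ <;> [skip; positivity]
      exact by push_cast; linarith [Nat.cast_nonneg (α := ℝ) n]
    nlinarith
  have hsmallR : ∀ c : ℝ, c ∈ Ioo L R → ν (Ico c R) ≠ ⊤ → ∀ ε : ℝ, 0 < ε →
      ∃ δ : ℝ, 0 < δ ∧ δ ≤ R - c ∧ ν (Ico (R - δ) R) < ENNReal.ofReal ε := by
    intro c hc hfin ε hε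
    have hcR : 0 < R - c := by linarith [hc.2]
    set s : ℕ → Set ℝ := fun n => Ico (R - (R - c) * (1 / (n + 1))) R with hsdef
    have hanti : Antitone s := by
      intro n m hnm
      apply Ico_subset_Ico_left
      have h1 : (1 : ℝ) / (m + 1) ≤ 1 / (n + 1) := by
        apply one_div_le_one_div_of_le (by positivity)
        exact_mod_cast Nat.succ_le_succ hnm
      nlinarith
    have hiInter : ⋂ n, s n = ∅ := by
      ext x
      simp only [mem_iInter, mem_empty_iff_false, iff_false]
      intro hx
      have hxR : x < R := (hx 0).2
      have hxle : ∀ n : ℕ, R - x ≤ (R - c) * (1 / (n + 1)) := by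
        intro n; have := (hx n).1; linarith
      have htend : Tendsto (fun n : ℕ => (R - c) * (1 / (n + 1))) atTop (𝓝 0) := by
        simpa using tendsto_one_div_add_atTop_nhds_zero_nat.const_mul (R - c)
      have := ge_of_tendsto htend (Filter.Eventually.of_forall hxle)
      linarith
    have hs0 : ν (s 0) ≠ ⊤ := by
      have : s 0 = Ico c R := by
        simp only [hsdef]; norm_num
      rw [this]; exact hfin
    have htend : Tendsto (ν ∘ s) atTop (𝓝 (ν (⋂ n, s n))) :=
      tendsto_measure_iInter_atTop (fun n => measurableSet_Ico.nullMeasurableSet)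
        hanti ⟨0, hs0⟩
    rw [hiInter, measure_empty] at htend
    have hev : ∀ᶠ n in atTop, ν (s n) < ENNReal.ofReal ε :=
      htend.eventually (Filter.Tendsto.eventually_lt_const (by simpa using ENNReal.ofReal_pos.2 hε)
        tendsto_id) |>.mono (fun n h => h)
    obtain ⟨n, hn⟩ := hev.exists
    refine ⟨(R - c) * (1 / (n + 1)), by positivity, ?_, hn⟩
    have h1 : (1 : ℝ) / (n + 1) ≤ 1 := by
      apply div_le_one_of_le₀ <;> [skip; positivity]
      exact by push_cast; linarith [Nat.cast_nonneg (α := ℝ) n]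
    nlinarith
  -- existence of limits at the endpoints
  have htendL : ∀ c : ℝ, c ∈ Ioo L R → ν (Ioc L c) ≠ ⊤ →
      Tendsto u (𝓝[Ioo L R] L) (𝓝 vL) := by
    intro c hc hfin
    apply tendsto_nhds_limUnder
    have hC : Cauchy (Filter.map u (𝓝[Ioo L R] L)) := by
      rw [Metric.cauchy_iff]
      refine ⟨Filter.map_neBot, fun ε hε => ?_⟩
      obtain ⟨δ, hδ0, hδc, hδν⟩ := hsmallL c hc hfin ε hε
      refine ⟨u '' (Ioo L (L + δ)), ?_, ?_⟩
      · apply Filter.image_mem_map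
        have : Ioo L R ∩ Iio (L + δ) ⊆ Ioo L (L + δ) :=
          fun x hx => ⟨hx.1.1, hx.2⟩
        exact Filter.mem_of_superset
          (Filter.inter_mem self_mem_nhdsWithin
            (mem_nhdsWithin_of_mem_nhds (Iio_mem_nhds (by linarith)))) this
      · have key : ∀ y z : ℝ, y ∈ Ioo L (L + δ) → z ∈ Ioo L (L + δ) → y ≤ z →
            dist (u z) (u y) < ε := by
          intro y z hy hz hyz
          have hsub : Icc y z ⊆ Ioo L R := by
            intro t ht
            exact ⟨lt_of_lt_of_le hy.1 ht.1,
              lt_of_le_of_lt ht.2 (lt_of_lt_of_le hz.2 (by linarith [hc.2]))⟩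
          have h1 := hug' y z hyz hsub
          have h2 : ν (Icc y z) ≤ ν (Ioc L (L + δ)) := by
            apply measure_mono
            intro t ht
            exact ⟨lt_of_lt_of_le hy.1 ht.1, le_trans ht.2 hz.2.le⟩
          have h3 : ENNReal.ofReal |u z - u y| < ENNReal.ofReal ε :=
            lt_of_le_of_lt (h1.trans h2) hδν
          rw [Real.dist_eq]
          exact (ENNReal.ofReal_lt_ofReal_iff hε).1 h3
        rintro a ⟨y, hy, rfl⟩ b ⟨z, hz, rfl⟩
        rcases le_total y z with hyz | hzy
        · rw [dist_comm]; exact key y z hy hz hyz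
        · exact key z y hz hy hzy
    obtain ⟨v, hv⟩ := CompleteSpace.complete hC
    exact ⟨v, hv⟩
  have htendR : ∀ c : ℝ, c ∈ Ioo L R → ν (Ico c R) ≠ ⊤ →
      Tendsto u (𝓝[Ioo L R] R) (𝓝 vR) := by
    intro c hc hfin
    apply tendsto_nhds_limUnder
    have hC : Cauchy (Filter.map u (𝓝[Ioo L R] R)) := by
      rw [Metric.cauchy_iff]
      refine ⟨Filter.map_neBot, fun ε hε => ?_⟩
      obtain ⟨δ, hδ0, hδc, hδν⟩ := hsmallR c hc hfin ε hε
      refine ⟨u '' (Ioo (R - δ) R), ?_, ?_⟩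
      · apply Filter.image_mem_map
        have : Ioo L R ∩ Ioi (R - δ) ⊆ Ioo (R - δ) R :=
          fun x hx => ⟨hx.2, hx.1.2⟩
        exact Filter.mem_of_superset
          (Filter.inter_mem self_mem_nhdsWithin
            (mem_nhdsWithin_of_mem_nhds (Ioi_mem_nhds (by linarith)))) this
      · have key : ∀ y z : ℝ, y ∈ Ioo (R - δ) R → z ∈ Ioo (R - δ) R → y ≤ z →
            dist (u z) (u y) < ε := by
          intro y z hy hz hyz
          have hsub : Icc y z ⊆ Ioo L R := by
            intro t ht
            exact ⟨lt_of_lt_of_le (lt_of_le_of_lt (by linarith [hc.1]) hy.1) ht.1,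
              lt_of_le_of_lt ht.2 hz.2⟩
          have h1 := hug' y z hyz hsub
          have h2 : ν (Icc y z) ≤ ν (Ico (R - δ) R) := by
            apply measure_mono
            intro t ht
            exact ⟨le_trans hy.1.le ht.1, lt_of_le_of_lt ht.2 hz.2⟩
          have h3 : ENNReal.ofReal |u z - u y| < ENNReal.ofReal ε :=
            lt_of_le_of_lt (h1.trans h2) hδν
          rw [Real.dist_eq]
          exact (ENNReal.ofReal_lt_ofReal_iff hε).1 h3
        rintro a ⟨y, hy, rfl⟩ b ⟨z, hz, rfl⟩
        rcases le_total y z with hyz | hzy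
        · rw [dist_comm]; exact key y z hy hz hyz
        · exact key z y hz hy hzy
    obtain ⟨v, hv⟩ := CompleteSpace.complete hC
    exact ⟨v, hv⟩
  -- bound claims
  have claimBL : ∀ c : ℝ, c ∈ Ioo L R → ENNReal.ofReal |u c - vL| ≤ ν (Ioc L c) := by
    intro c hc
    by_cases hfin : ν (Ioc L c) = ⊤
    · rw [hfin]; exact le_top
    have hT := htendL c hc hfin
    have hev : ∀ᶠ a in 𝓝[Ioo L R] L, |u c - u a| ≤ (ν (Ioc L c)).toReal := by
      filter_upwards [self_mem_nhdsWithin,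
        mem_nhdsWithin_of_mem_nhds (Iio_mem_nhds hc.1)] with a ha hac
      have h1 : ENNReal.ofReal |u c - u a| ≤ ν (Icc a c) :=
        hug' a c (le_of_lt hac) (fun t ht =>
          ⟨lt_of_lt_of_le ha.1 ht.1, lt_of_le_of_lt ht.2 hc.2⟩)
      have h2 : ν (Icc a c) ≤ ν (Ioc L c) :=
        measure_mono (fun t ht => ⟨lt_of_lt_of_le ha.1 ht.1, ht.2⟩)
      exact (ENNReal.ofReal_le_iff_le_toReal hfin).1 (h1.trans h2)
    have htt : Tendsto (fun a => |u c - u a|) (𝓝[Ioo L R] L) (𝓝 |u c - vL|) :=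
      (tendsto_const_nhds.sub hT).abs
    have := le_of_tendsto htt hev
    calc ENNReal.ofReal |u c - vL| ≤ ENNReal.ofReal (ν (Ioc L c)).toReal :=
          ENNReal.ofReal_le_ofReal this
      _ ≤ ν (Ioc L c) := ENNReal.ofReal_toReal_le
  have claimBR : ∀ c : ℝ, c ∈ Ioo L R → ENNReal.ofReal |vR - u c| ≤ ν (Ico c R) := by
    intro c hc
    by_cases hfin : ν (Ico c R) = ⊤
    · rw [hfin]; exact le_top
    have hT := htendR c hc hfin
    have hev : ∀ᶠ a in 𝓝[Ioo L R] R, |u a - u c| ≤ (ν (Ico c R)).toReal := by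
      filter_upwards [self_mem_nhdsWithin,
        mem_nhdsWithin_of_mem_nhds (Ioi_mem_nhds hc.2)] with a ha hac
      have h1 : ENNReal.ofReal |u a - u c| ≤ ν (Icc c a) :=
        hug' c a (le_of_lt hac) (fun t ht =>
          ⟨lt_of_lt_of_le hc.1 ht.1, lt_of_le_of_lt ht.2 ha.2⟩)
      have h2 : ν (Icc c a) ≤ ν (Ico c R) :=
        measure_mono (fun t ht => ⟨ht.1, lt_of_le_of_lt ht.2 ha.2⟩)
      exact (ENNReal.ofReal_le_iff_le_toReal hfin).1 (h1.trans h2)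
    have htt : Tendsto (fun a => |u a - u c|) (𝓝[Ioo L R] R) (𝓝 |vR - u c|) :=
      (hT.sub tendsto_const_nhds).abs
    have := le_of_tendsto htt hev
    calc ENNReal.ofReal |vR - u c| ≤ ENNReal.ofReal (ν (Ico c R)).toReal :=
          ENNReal.ofReal_le_ofReal this
      _ ≤ ν (Ico c R) := ENNReal.ofReal_toReal_le
  have hx₀mem : x₀ ∈ Ioo L R := ⟨by simp only [hLdef]; linarith, by simp only [hRdef]; linarith⟩
  have claimBLR : ENNReal.ofReal |vR - vL| ≤ ν (Ioo L R) := by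
    have h1 := claimBL x₀ hx₀mem
    have h2 := claimBR x₀ hx₀mem
    have htri : |vR - vL| ≤ |vR - u x₀| + |u x₀ - vL| := abs_sub_le _ _ _
    have hsingle : ν {x₀} = 0 := by
      apply withDensity_absolutelyContinuous volume _
      exact measure_singleton x₀
    have hIco : ν (Ico x₀ R) ≤ ν (Ioo x₀ R) := by
      calc ν (Ico x₀ R) ≤ ν ({x₀} ∪ Ioo x₀ R) := by
            apply measure_mono
            intro t ht
            rcases eq_or_lt_of_le ht.1 with h | h
            · exact Or.inl (by simp [h.symm])
            · exact Or.inr ⟨h, ht.2⟩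
        _ ≤ ν {x₀} + ν (Ioo x₀ R) := measure_union_le _ _
        _ = ν (Ioo x₀ R) := by rw [hsingle, zero_add]
    have hunion : ν (Ioc L x₀) + ν (Ioo x₀ R) = ν (Ioo L R) := by
      rw [← measure_union (by
        rw [Set.disjoint_left]
        intro t ht1 ht2
        exact absurd ht1.2 (not_le.2 ht2.1)) measurableSet_Ioo]
      rw [Ioc_union_Ioo_eq_Ioo hx₀mem.1.le hx₀mem.2]
    calc ENNReal.ofReal |vR - vL| ≤ ENNReal.ofReal (|vR - u x₀| + |u x₀ - vL|) :=
          ENNReal.ofReal_le_ofReal htri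
      _ ≤ ENNReal.ofReal |vR - u x₀| + ENNReal.ofReal |u x₀ - vL| :=
          ENNReal.ofReal_add_le
      _ ≤ ν (Ico x₀ R) + ν (Ioc L x₀) := add_le_add h2 h1
      _ ≤ ν (Ioo x₀ R) + ν (Ioc L x₀) := add_le_add hIco le_rfl
      _ = ν (Ioc L x₀) + ν (Ioo x₀ R) := add_comm _ _
      _ = ν (Ioo L R) := hunion
  -- the extensions
  set ut : ℝ → ℝ := fun x => if x ≤ L then vL else if x < R then u x else vR with hutdef
  set gt : ℝ → ℝ := (Ioo L R).indicator g with hgtdef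
  have hut_eq : ∀ x ∈ Ioo L R, ut x = u x := by
    intro x hx
    simp only [hutdef, if_neg (not_le.2 hx.1), if_pos hx.2]
  have hgt_int : ∀ a b : ℝ, (∫⁻ t in Icc a b, ENNReal.ofReal (gt t)) =
      ν (Ioo L R ∩ Icc a b) := by
    intro a b
    have hfun : (fun t => ENNReal.ofReal (gt t)) =
        (Ioo L R).indicator (fun t => ENNReal.ofReal (g t)) := by
      funext t
      by_cases ht : t ∈ Ioo L R
      · simp [hgtdef, indicator_of_mem ht]
      · simp [hgtdef, indicator_of_notMem ht]
    rw [hfun, lintegral_indicator measurableSet_Ioo,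
      Measure.restrict_restrict measurableSet_Ioo, hν _ (measurableSet_Ioo.inter measurableSet_Icc)]
  have hugrad : IsUpperGradientOn gt ut (Ioo L' R') := by
    refine ⟨fun x => indicator_nonneg (fun t _ => hgnn t) x,
      hgm.indicator measurableSet_Ioo, ?_⟩
    intro a b hab _
    rw [hgt_int a b]
    rcases le_or_gt b L with hbL | hLb
    · have ha : ut a = vL := if_pos (hab.trans hbL)
      have hb : ut b = vL := if_pos hbL
      simp [ha, hb]
    rcases le_or_gt R a with hRa | haR
    · have ha : ut a = vR := by
        simp only [hutdef, if_neg (not_le.2 (lt_of_lt_of_le hLR hRa)), if_neg (not_lt.2 hRa)]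
      have hb : ut b = vR := by
        simp only [hutdef, if_neg (not_le.2 (lt_of_lt_of_le hLR (hRa.trans hab))),
          if_neg (not_lt.2 (hRa.trans hab))]
      simp [ha, hb]
    rcases le_or_gt a L with haL | hLa
    · rcases lt_or_ge b R with hbR | hRb
      · -- a ≤ L < b < R
        have ha : ut a = vL := if_pos haL
        have hb : ut b = u b := hut_eq b ⟨hLb, hbR⟩
        rw [ha, hb]
        refine (claimBL b ⟨hLb, hbR⟩).trans (measure_mono ?_)
        intro t ht
        exact ⟨⟨ht.1, lt_of_le_of_lt ht.2 hbR⟩, ⟨haL.trans ht.1.le, ht.2⟩⟩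
      · -- a ≤ L, R ≤ b
        have ha : ut a = vL := if_pos haL
        have hb : ut b = vR := by
          simp only [hutdef, if_neg (not_le.2 (lt_of_lt_of_le hLR hRb)), if_neg (not_lt.2 hRb)]
        rw [ha, hb]
        refine claimBLR.trans (measure_mono ?_)
        intro t ht
        exact ⟨ht, ⟨haL.trans ht.1.le, ht.2.le.trans hRb⟩⟩
    · rcases lt_or_ge b R with hbR | hRb
      · -- both in Ioo
        have ha : ut a = u a := hut_eq a ⟨hLa, lt_of_le_of_lt hab hbR⟩
        have hb : ut b = u b := hut_eq b ⟨lt_of_lt_of_le hLa hab, hbR⟩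
        rw [ha, hb]
        have hsub : Icc a b ⊆ Ioo L R := fun t ht =>
          ⟨lt_of_lt_of_le hLa ht.1, lt_of_le_of_lt ht.2 hbR⟩
        exact (hug' a b hab hsub).trans (measure_mono (fun t ht => ⟨hsub ht, ht⟩))
      · -- L < a < R ≤ b
        have ha : ut a = u a := hut_eq a ⟨hLa, haR⟩
        have hb : ut b = vR := by
          simp only [hutdef, if_neg (not_le.2 (lt_of_lt_of_le hLR hRb)), if_neg (not_lt.2 hRb)]
        rw [ha, hb]
        refine (claimBR a ⟨hLa, haR⟩).trans (measure_mono ?_)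
        intro t ht
        exact ⟨⟨lt_of_lt_of_le hLa ht.1, ht.2⟩, ⟨ht.1, ht.2.le.trans hRb⟩⟩
  -- integrability of the extension
  have hμfin : μ (Ioo L' R') < ⊤ := (hμ L' R' hL'R').2
  have hut_int : IntegrableOn ut (Ioo L' R') μ := by
    have hdecomp : ut = ((Iic L).indicator (fun _ => vL) + (Ioo L R).indicator u +
        (Ici R).indicator fun _ => vR) := by
      funext x
      simp only [Pi.add_apply, indicator_apply, mem_Iic, mem_Ioo, mem_Ici, hutdef]
      by_cases h1 : x ≤ L
      · rw [if_pos h1, if_pos h1, if_neg (by push_neg; intro h; exact absurd h (not_lt.2 h1)),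
          if_neg (not_le.2 (lt_of_le_of_lt h1 hLR))]
        ring
      · rw [if_neg h1]
        by_cases h2 : x < R
        · rw [if_pos h2, if_neg h1, if_pos ⟨not_le.1 h1, h2⟩, if_neg (not_le.2 h2)]
          ring
        · rw [if_neg h2, if_neg h1, if_neg (fun hmem => h2 hmem.2), if_pos (not_lt.1 h2)]
          ring
    rw [hdecomp]
    have hres : ∀ s : Set ℝ, MeasurableSet s → ∀ c : ℝ,
        Integrable (s.indicator fun _ => c) (μ.restrict (Ioo L' R')) := by
      intro s hs c
      rw [integrable_indicator_iff hs]
      refine integrableOn_const ?_ (by simp)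
      rw [Measure.restrict_apply hs]
      exact (lt_of_le_of_lt (measure_mono inter_subset_right) hμfin).ne
    have i1 := hres (Iic L) measurableSet_Iic vL
    have i3 := hres (Ici R) measurableSet_Ici vR
    have i2 : Integrable ((Ioo L R).indicator u) (μ.restrict (Ioo L' R')) :=
      (hu.integrable_indicator measurableSet_Ioo).integrableOn
    exact (i1.add i2).add i3
  -- apply the hypothesis
  have happly := h ut gt hut_int hugrad
  -- LHS equality
  have havg : (⨍ s in Ioo L R, ut s ∂μ) = ⨍ s in Ioo L R, u s ∂μ := by
    rw [setAverage_eq, setAverage_eq, setIntegral_congr_fun measurableSet_Ioo hut_eq]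
  have hLHS : PoinLHS μ ut (Ioo L R) = PoinLHS μ u (Ioo L R) := by
    unfold PoinLHS
    congr 1
    apply setLIntegral_congr_fun measurableSet_Ioo
    intro t ht
    beta_reduce
    rw [havg, hut_eq t ht]
  -- RHS inequality
  have hp0 : (0:ℝ) < p := lt_of_lt_of_le one_pos hp
  have hRHS : PoinRHS μ (fun t => ENNReal.ofReal (gt t)) p (Ioo L' R') ≤
      PoinRHS μ (fun t => ENNReal.ofReal (g t)) p (Ioo L R) := by
    unfold PoinRHS
    apply ENNReal.rpow_le_rpow _ (by positivity)
    have hnum : (∫⁻ t in Ioo L' R', ENNReal.ofReal (gt t) ^ p ∂μ) =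
        ∫⁻ t in Ioo L R, ENNReal.ofReal (g t) ^ p ∂μ := by
      have hfun : (fun t => ENNReal.ofReal (gt t) ^ p) =
          (Ioo L R).indicator (fun t => ENNReal.ofReal (g t) ^ p) := by
        funext t
        by_cases ht : t ∈ Ioo L R
        · simp [hgtdef, indicator_of_mem ht]
        · simp [hgtdef, indicator_of_notMem ht, ENNReal.zero_rpow_of_pos hp0]
      rw [hfun, lintegral_indicator measurableSet_Ioo,
        Measure.restrict_restrict measurableSet_Ioo,
        inter_eq_self_of_subset_left hsubI]
    rw [hnum]
    exact ENNReal.div_le_div_left (measure_mono hsubI) _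
  calc PoinLHS μ u (Ioo L R) = PoinLHS μ ut (Ioo L R) := hLHS.symm
    _ ≤ ENNReal.ofReal (CPI * r₀) *
        PoinRHS μ (fun t => ENNReal.ofReal (gt t)) p (Ioo L' R') := happly
    _ ≤ ENNReal.ofReal (CPI * r₀) *
        PoinRHS μ (fun t => ENNReal.ofReal (g t)) p (Ioo L R) :=
      mul_le_mul_right hRHS _
end

section
/- Let 1 ≤ p < ∞, M > 0, and let w be a nonnegative locally integrable function that is an A_p weight within the interval (0, M) with constant C. Define the periodically reflected weight ŵ on ℝ by ŵ(x) = w(2kM − x) for x ∈ [(2k−1)M, 2kM] and ŵ(x) = w(x − 2kM) for x ∈ [2kM, (2k+1)M], k ∈ ℤ (i.e., ŵ is the even, 2M-periodic extension of w restricted to (0,M)). Then ŵ is a global A_p weight on ℝ, with global A_p constant depending only on C and p. -/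
open MeasureTheory Set Filter
open scoped ENNReal NNReal Topology

section AuxRefl

open MeasureTheory Set

/-! ### Change of variables for `lintegral` on intervals -/

private lemma lint_shift (c a b : ℝ) (f : ℝ → ℝ≥0∞) :
    ∫⁻ y in Ioo a b, f (y + c) = ∫⁻ y in Ioo (a + c) (b + c), f y := by
  have hp : MeasurePreserving (fun y : ℝ => y + c) volume volume :=
    measurePreserving_add_right volume c
  have he : MeasurableEmbedding (fun y : ℝ => y + c) :=
    (Homeomorph.addRight c).measurableEmbedding
  have hpre : (fun y : ℝ => y + c) ⁻¹' Ioo (a + c) (b + c) = Ioo a b := by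
    ext t
    simp only [Set.mem_preimage, Set.mem_Ioo]
    constructor <;> intro h <;> exact ⟨by linarith [h.1], by linarith [h.2]⟩
  calc ∫⁻ y in Ioo a b, f (y + c)
      = ∫⁻ y, f y ∂(Measure.map (fun y : ℝ => y + c) (volume.restrict (Ioo a b))) :=
        (he.lintegral_map f).symm
    _ = ∫⁻ y in Ioo (a + c) (b + c), f y := by
        rw [← hpre, ← Measure.restrict_map he.measurable measurableSet_Ioo, hp.map_eq]

private lemma lint_shift' (c a b : ℝ) (f : ℝ → ℝ≥0∞) :
    ∫⁻ y in Ioo a b, f (y - c) = ∫⁻ y in Ioo (a - c) (b - c), f y := by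
  simpa [sub_eq_add_neg] using lint_shift (-c) a b f

private lemma lint_reflect (c a b : ℝ) (f : ℝ → ℝ≥0∞) :
    ∫⁻ y in Ioo a b, f (c - y) = ∫⁻ y in Ioo (c - b) (c - a), f y := by
  have hp : MeasurePreserving (fun y : ℝ => c - y) volume volume :=
    Measure.measurePreserving_sub_left volume c
  have he : MeasurableEmbedding (fun y : ℝ => c - y) := by
    have h : (fun y : ℝ => c - y) = (fun y : ℝ => c + y) ∘ (fun y : ℝ => -y) := by
      funext y; simp [sub_eq_add_neg]
    rw [h]
    exact (Homeomorph.addLeft c).measurableEmbedding.comp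
      (Homeomorph.neg ℝ).measurableEmbedding
  have hpre : (fun y : ℝ => c - y) ⁻¹' Ioo (c - b) (c - a) = Ioo a b := by
    ext t
    simp only [Set.mem_preimage, Set.mem_Ioo]
    constructor <;> intro h <;> exact ⟨by linarith [h.1, h.2], by linarith [h.1, h.2]⟩
  calc ∫⁻ y in Ioo a b, f (c - y)
      = ∫⁻ y, f y ∂(Measure.map (fun y : ℝ => c - y) (volume.restrict (Ioo a b))) :=
        (he.lintegral_map f).symm
    _ = ∫⁻ y in Ioo (c - b) (c - a), f y := by
        rw [← hpre, ← Measure.restrict_map he.measurable measurableSet_Ioo, hp.map_eq]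

/-! ### The reflected distance function -/

private lemma round_eq_of_even {M : ℝ} (hM : 0 < M) (k : ℤ) {y : ℝ}
    (h1 : 2*(k:ℝ)*M < y) (h2 : y < (2*(k:ℝ)+1)*M) : round (y/(2*M)) = k := by
  have h2M : (0:ℝ) < 2*M := by linarith
  rw [round_eq, Int.floor_eq_iff]
  constructor
  · rw [← sub_le_iff_le_add]
    rw [le_div_iff₀ h2M]
    nlinarith
  · rw [← lt_sub_iff_add_lt]
    rw [div_lt_iff₀ h2M]
    push_cast
    nlinarith

private lemma round_eq_of_odd {M : ℝ} (hM : 0 < M) (k : ℤ) {y : ℝ}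
    (h1 : (2*(k:ℝ)+1)*M < y) (h2 : y < (2*(k:ℝ)+2)*M) : round (y/(2*M)) = k + 1 := by
  have h2M : (0:ℝ) < 2*M := by linarith
  rw [round_eq, Int.floor_eq_iff]
  constructor
  · rw [← sub_le_iff_le_add]
    rw [le_div_iff₀ h2M]
    push_cast
    nlinarith
  · rw [← lt_sub_iff_add_lt]
    rw [div_lt_iff₀ h2M]
    push_cast
    nlinarith

private lemma d_even {M : ℝ} (hM : 0 < M) (k : ℤ) {y : ℝ}
    (h1 : 2*(k:ℝ)*M < y) (h2 : y < (2*(k:ℝ)+1)*M) :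
    |y - 2*M*(round (y/(2*M)) : ℝ)| = y - 2*(k:ℝ)*M := by
  rw [round_eq_of_even hM k h1 h2, abs_of_pos (by nlinarith)]
  ring

private lemma d_odd {M : ℝ} (hM : 0 < M) (k : ℤ) {y : ℝ}
    (h1 : (2*(k:ℝ)+1)*M < y) (h2 : y < (2*(k:ℝ)+2)*M) :
    |y - 2*M*(round (y/(2*M)) : ℝ)| = (2*(k:ℝ)+2)*M - y := by
  rw [round_eq_of_odd hM k h1 h2]
  rw [abs_of_nonpos (by push_cast; nlinarith)]
  push_cast
  ring

private lemma d_measurable (M : ℝ) :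
    Measurable (fun y : ℝ => |y - 2*M*(round (y/(2*M)) : ℝ)|) := by
  have h1 : Measurable (fun y : ℝ => round (y/(2*M))) := by
    simp only [round_eq]
    exact Int.measurable_floor.comp ((measurable_id.div_const _).add_const _)
  have h2 : Measurable (fun n : ℤ => (n : ℝ)) := measurable_from_top
  exact (measurable_id.sub ((h2.comp h1).const_mul _)).abs

/-! ### Integral of `f ∘ d` over pieces of cells -/

private lemma piece_even {M : ℝ} (hM : 0 < M) (k : ℤ) (a b : ℝ)
    (ha : 2*(k:ℝ)*M ≤ a) (hb : b ≤ (2*(k:ℝ)+1)*M) (f : ℝ → ℝ≥0∞) :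
    ∫⁻ y in Ioo a b, f |y - 2*M*(round (y/(2*M)) : ℝ)|
      = ∫⁻ y in Ioo (a - 2*(k:ℝ)*M) (b - 2*(k:ℝ)*M), f y := by
  have hsub : Ioo a b ⊆ Ioo (2*(k:ℝ)*M) ((2*(k:ℝ)+1)*M) := Ioo_subset_Ioo ha hb
  calc ∫⁻ y in Ioo a b, f |y - 2*M*(round (y/(2*M)) : ℝ)|
      = ∫⁻ y in Ioo a b, f (y - 2*(k:ℝ)*M) := by
        refine setLIntegral_congr_fun measurableSet_Ioo ?_
        intro y hy
        dsimp only; rw [d_even hM k (hsub hy).1 (hsub hy).2]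
    _ = ∫⁻ y in Ioo (a - 2*(k:ℝ)*M) (b - 2*(k:ℝ)*M), f y := lint_shift' _ a b f

private lemma piece_odd {M : ℝ} (hM : 0 < M) (k : ℤ) (a b : ℝ)
    (ha : (2*(k:ℝ)+1)*M ≤ a) (hb : b ≤ (2*(k:ℝ)+2)*M) (f : ℝ → ℝ≥0∞) :
    ∫⁻ y in Ioo a b, f |y - 2*M*(round (y/(2*M)) : ℝ)|
      = ∫⁻ y in Ioo ((2*(k:ℝ)+2)*M - b) ((2*(k:ℝ)+2)*M - a), f y := by
  have hsub : Ioo a b ⊆ Ioo ((2*(k:ℝ)+1)*M) ((2*(k:ℝ)+2)*M) := Ioo_subset_Ioo ha hb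
  calc ∫⁻ y in Ioo a b, f |y - 2*M*(round (y/(2*M)) : ℝ)|
      = ∫⁻ y in Ioo a b, f ((2*(k:ℝ)+2)*M - y) := by
        refine setLIntegral_congr_fun measurableSet_Ioo ?_
        intro y hy
        dsimp only; rw [d_odd hM k (hsub hy).1 (hsub hy).2]
    _ = _ := lint_reflect _ a b f

private lemma cell_lint {M : ℝ} (hM : 0 < M) (f : ℝ → ℝ≥0∞) (j : ℤ) :
    ∫⁻ y in Ioo ((j:ℝ)*M) (((j:ℝ)+1)*M), f |y - 2*M*(round (y/(2*M)) : ℝ)|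
      = ∫⁻ y in Ioo 0 M, f y := by
  rcases Int.even_or_odd j with ⟨k, hk⟩ | ⟨k, hk⟩
  · have hjr : (j:ℝ) = 2*(k:ℝ) := by rw [hk]; push_cast; ring
    rw [hjr, piece_even hM k _ _ (by linarith) (by linarith) f,
      show 2*(k:ℝ)*M - 2*(k:ℝ)*M = 0 by ring,
      show (2*(k:ℝ)+1)*M - 2*(k:ℝ)*M = M by ring]
  · have hjr : (j:ℝ) = 2*(k:ℝ)+1 := by rw [hk]; push_cast; ring
    rw [hjr, piece_odd hM k _ _ (by linarith) (by nlinarith) f]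
    have e1 : (2*(k:ℝ)+2)*M - (2*(k:ℝ)+1+1)*M = 0 := by ring
    have e2 : (2*(k:ℝ)+2)*M - (2*(k:ℝ)+1)*M = M := by ring
    rw [e1, e2]

private lemma chain_lint {M : ℝ} (hM : 0 < M) (f : ℝ → ℝ≥0∞) (j : ℤ) (n : ℕ) :
    ∫⁻ y in Icc ((j:ℝ)*M) (((j:ℝ)+(n:ℝ))*M), f |y - 2*M*(round (y/(2*M)) : ℝ)|
      ≤ (n : ℝ≥0∞) * ∫⁻ y in Ioo 0 M, f y := by
  induction n with
  | zero =>
    have h0 : volume.restrict (Icc ((j:ℝ)*M) (((j:ℝ)+(0:ℕ))*M)) = 0 := by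
      rw [Measure.restrict_eq_zero]
      simp [Real.volume_Icc]
    rw [h0]
    simp
  | succ n ih =>
    have hjn : ((j:ℝ)+(n:ℝ))*M ≤ ((j:ℝ)+((n:ℕ)+1:ℕ))*M := by
      have : (((n:ℕ)+1:ℕ):ℝ) = (n:ℝ)+1 := by push_cast; ring
      nlinarith
    have hsub : Icc ((j:ℝ)*M) (((j:ℝ)+((n:ℕ)+1:ℕ))*M)
        ⊆ Icc ((j:ℝ)*M) (((j:ℝ)+(n:ℝ))*M) ∪ Icc (((j:ℝ)+(n:ℝ))*M) (((j:ℝ)+((n:ℕ)+1:ℕ))*M) :=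
      Icc_subset_Icc_union_Icc
    have hlast : ∫⁻ y in Icc (((j:ℝ)+(n:ℝ))*M) (((j:ℝ)+((n:ℕ)+1:ℕ))*M),
        f |y - 2*M*(round (y/(2*M)) : ℝ)| = ∫⁻ y in Ioo 0 M, f y := by
      rw [← Measure.restrict_congr_set Ioo_ae_eq_Icc]
      have e1 : ((j:ℝ)+(n:ℝ))*M = ((j+(n:ℤ) : ℤ):ℝ)*M := by push_cast; ring
      have e2 : ((j:ℝ)+((n:ℕ)+1:ℕ))*M = (((j+(n:ℤ) : ℤ):ℝ)+1)*M := by push_cast; ring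
      rw [e1, e2]
      exact cell_lint hM f (j+(n:ℤ))
    calc ∫⁻ y in Icc ((j:ℝ)*M) (((j:ℝ)+((n:ℕ)+1:ℕ))*M), f |y - 2*M*(round (y/(2*M)) : ℝ)|
        ≤ ∫⁻ y, f |y - 2*M*(round (y/(2*M)) : ℝ)|
            ∂(volume.restrict (Icc ((j:ℝ)*M) (((j:ℝ)+(n:ℝ))*M))
              + volume.restrict (Icc (((j:ℝ)+(n:ℝ))*M) (((j:ℝ)+((n:ℕ)+1:ℕ))*M))) := by
          refine lintegral_mono' (le_trans (Measure.restrict_mono hsub le_rfl) ?_) le_rfl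
          exact Measure.restrict_union_le _ _
      _ = (∫⁻ y in Icc ((j:ℝ)*M) (((j:ℝ)+(n:ℝ))*M), f |y - 2*M*(round (y/(2*M)) : ℝ)|)
            + ∫⁻ y in Icc (((j:ℝ)+(n:ℝ))*M) (((j:ℝ)+((n:ℕ)+1:ℕ))*M),
                f |y - 2*M*(round (y/(2*M)) : ℝ)| := lintegral_add_measure _ _ _
      _ ≤ (n : ℝ≥0∞) * (∫⁻ y in Ioo 0 M, f y) + ∫⁻ y in Ioo 0 M, f y := by
          rw [hlast]; exact add_le_add ih le_rfl
      _ = ((n:ℕ)+1:ℕ) * ∫⁻ y in Ioo 0 M, f y := by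
          push_cast
          ring

/-! ### The key covering lemma -/

private lemma key_lemma {M : ℝ} (hM : 0 < M) (x r : ℝ) (hr : 0 < r) :
    ∃ c s : ℝ, 0 < s ∧ Ioo (c-s) (c+s) ⊆ Ioo 0 M ∧
      ∀ f : ℝ → ℝ≥0∞,
        (∫⁻ y in Ioo (x-r) (x+r), f |y - 2*M*(round (y/(2*M)) : ℝ)|) * volume (Ioo (c-s) (c+s))
          ≤ 3 * volume (Ioo (x-r) (x+r)) * ∫⁻ y in Ioo (c-s) (c+s), f y := by
  have hvB : volume (Ioo (x-r) (x+r)) = ENNReal.ofReal (2*r) := by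
    rw [Real.volume_Ioo]; ring_nf
  set j : ℤ := ⌊(x-r)/M⌋ with hj
  have hj1 : (j:ℝ)*M ≤ x - r := by
    have := Int.floor_le ((x-r)/M)
    rw [← hj] at this
    calc (j:ℝ)*M ≤ ((x-r)/M)*M := by nlinarith
      _ = x - r := by field_simp
  have hj2 : x - r < ((j:ℝ)+1)*M := by
    have := Int.lt_floor_add_one ((x-r)/M)
    rw [← hj] at this
    calc x - r = ((x-r)/M)*M := by field_simp
      _ < ((j:ℝ)+1)*M := by nlinarith
  rcases le_or_gt M (2*r) with hM2r | hM2r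
  · -- big ball: use the whole interval (0, M)
    refine ⟨M/2, M/2, by positivity, ?_, ?_⟩
    · rw [show M/2 - M/2 = 0 by ring, show M/2 + M/2 = M by ring]
    intro f
    rw [show M/2 - M/2 = 0 by ring, show M/2 + M/2 = M by ring]
    set n : ℕ := ⌈2*r/M⌉₊ + 1 with hn
    have hceil : 2*r ≤ (⌈2*r/M⌉₊ : ℝ) * M := by
      have := Nat.le_ceil (2*r/M)
      calc 2*r = (2*r/M)*M := by field_simp
        _ ≤ (⌈2*r/M⌉₊ : ℝ) * M := by nlinarith
    have hBsub : Ioo (x-r) (x+r) ⊆ Icc ((j:ℝ)*M) (((j:ℝ)+(n:ℝ))*M) := by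
      intro y hy
      refine ⟨le_of_lt (lt_of_le_of_lt hj1 hy.1), le_of_lt (lt_of_lt_of_le hy.2 ?_)⟩
      have hnr : (n:ℝ) = (⌈2*r/M⌉₊ : ℝ) + 1 := by rw [hn]; push_cast; ring
      rw [hnr]
      nlinarith
    have h1 : ∫⁻ y in Ioo (x-r) (x+r), f |y - 2*M*(round (y/(2*M)) : ℝ)|
        ≤ (n : ℝ≥0∞) * ∫⁻ y in Ioo 0 M, f y :=
      le_trans (lintegral_mono' (Measure.restrict_mono hBsub le_rfl) le_rfl)
        (chain_lint hM f j n)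
    have h2 : (n : ℝ≥0∞) * volume (Ioo (0:ℝ) M) ≤ 3 * volume (Ioo (x-r) (x+r)) := by
      rw [hvB, Real.volume_Ioo, sub_zero]
      have e1 : (n : ℝ≥0∞) = ENNReal.ofReal (n:ℝ) := by
        rw [ENNReal.ofReal_natCast]
      have e2 : (3 : ℝ≥0∞) = ENNReal.ofReal 3 := by norm_num
      rw [e1, e2, ← ENNReal.ofReal_mul (by positivity), ← ENNReal.ofReal_mul (by norm_num)]
      apply ENNReal.ofReal_le_ofReal
      have hceil2 : (⌈2*r/M⌉₊ : ℝ) < 2*r/M + 1 := Nat.ceil_lt_add_one (by positivity)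
      have hnr : (n:ℝ) = (⌈2*r/M⌉₊ : ℝ) + 1 := by rw [hn]; push_cast; ring
      rw [hnr]
      have : (2*r/M)*M = 2*r := by field_simp
      nlinarith
    calc (∫⁻ y in Ioo (x-r) (x+r), f |y - 2*M*(round (y/(2*M)) : ℝ)|) * volume (Ioo (0:ℝ) M)
        ≤ ((n : ℝ≥0∞) * ∫⁻ y in Ioo 0 M, f y) * volume (Ioo (0:ℝ) M) :=
          mul_le_mul' h1 le_rfl
      _ = ((n : ℝ≥0∞) * volume (Ioo (0:ℝ) M)) * ∫⁻ y in Ioo 0 M, f y := by ring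
      _ ≤ (3 * volume (Ioo (x-r) (x+r))) * ∫⁻ y in Ioo 0 M, f y := mul_le_mul' h2 le_rfl
      _ = 3 * volume (Ioo (x-r) (x+r)) * ∫⁻ y in Ioo 0 M, f y := by ring
  · -- small ball
    rcases le_or_gt (x+r) (((j:ℝ)+1)*M) with hin | hin
    · -- contained in a single half-cell
      rcases Int.even_or_odd j with ⟨k, hk⟩ | ⟨k, hk⟩
      · have hjr : (j:ℝ) = 2*(k:ℝ) := by rw [hk]; push_cast; ring
        rw [hjr] at hj1 hj2 hin
        refine ⟨x - 2*(k:ℝ)*M, r, hr, ?_, ?_⟩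
        · intro y hy
          simp only [Set.mem_Ioo] at hy ⊢
          constructor <;> nlinarith [hy.1, hy.2]
        intro f
        rw [piece_even hM k _ _ (by linarith) (by nlinarith) f]
        have e1 : x - r - 2*(k:ℝ)*M = x - 2*(k:ℝ)*M - r := by ring
        have e2 : x + r - 2*(k:ℝ)*M = x - 2*(k:ℝ)*M + r := by ring
        rw [e1, e2]
        calc (∫⁻ y in Ioo (x - 2*(k:ℝ)*M - r) (x - 2*(k:ℝ)*M + r), f y)
              * volume (Ioo (x - 2*(k:ℝ)*M - r) (x - 2*(k:ℝ)*M + r))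
            ≤ 3 * ((∫⁻ y in Ioo (x - 2*(k:ℝ)*M - r) (x - 2*(k:ℝ)*M + r), f y)
              * volume (Ioo (x - 2*(k:ℝ)*M - r) (x - 2*(k:ℝ)*M + r))) := by
              exact le_mul_of_one_le_left zero_le (by norm_num)
          _ = 3 * volume (Ioo (x - 2*(k:ℝ)*M - r) (x - 2*(k:ℝ)*M + r))
              * ∫⁻ y in Ioo (x - 2*(k:ℝ)*M - r) (x - 2*(k:ℝ)*M + r), f y := by ring
          _ ≤ 3 * volume (Ioo (x-r) (x+r))
              * ∫⁻ y in Ioo (x - 2*(k:ℝ)*M - r) (x - 2*(k:ℝ)*M + r), f y := by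
              have : volume (Ioo (x - 2*(k:ℝ)*M - r) (x - 2*(k:ℝ)*M + r))
                  = volume (Ioo (x-r) (x+r)) := by
                rw [Real.volume_Ioo, Real.volume_Ioo]; ring_nf
              rw [this]
      · have hjr : (j:ℝ) = 2*(k:ℝ)+1 := by rw [hk]; push_cast; ring
        rw [hjr] at hj1 hj2 hin
        refine ⟨(2*(k:ℝ)+2)*M - x, r, hr, ?_, ?_⟩
        · intro y hy
          simp only [Set.mem_Ioo] at hy ⊢
          constructor <;> nlinarith [hy.1, hy.2]
        intro f
        rw [piece_odd hM k _ _ (by linarith) (by nlinarith) f]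
        have e1 : (2*(k:ℝ)+2)*M - (x+r) = (2*(k:ℝ)+2)*M - x - r := by ring
        have e2 : (2*(k:ℝ)+2)*M - (x-r) = (2*(k:ℝ)+2)*M - x + r := by ring
        rw [e1, e2]
        calc (∫⁻ y in Ioo ((2*(k:ℝ)+2)*M - x - r) ((2*(k:ℝ)+2)*M - x + r), f y)
              * volume (Ioo ((2*(k:ℝ)+2)*M - x - r) ((2*(k:ℝ)+2)*M - x + r))
            ≤ 3 * ((∫⁻ y in Ioo ((2*(k:ℝ)+2)*M - x - r) ((2*(k:ℝ)+2)*M - x + r), f y)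
              * volume (Ioo ((2*(k:ℝ)+2)*M - x - r) ((2*(k:ℝ)+2)*M - x + r))) :=
              le_mul_of_one_le_left zero_le (by norm_num)
          _ = 3 * volume (Ioo ((2*(k:ℝ)+2)*M - x - r) ((2*(k:ℝ)+2)*M - x + r))
              * ∫⁻ y in Ioo ((2*(k:ℝ)+2)*M - x - r) ((2*(k:ℝ)+2)*M - x + r), f y := by ring
          _ ≤ 3 * volume (Ioo (x-r) (x+r))
              * ∫⁻ y in Ioo ((2*(k:ℝ)+2)*M - x - r) ((2*(k:ℝ)+2)*M - x + r), f y := by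
              have : volume (Ioo ((2*(k:ℝ)+2)*M - x - r) ((2*(k:ℝ)+2)*M - x + r))
                  = volume (Ioo (x-r) (x+r)) := by
                rw [Real.volume_Ioo, Real.volume_Ioo]; ring_nf
              rw [this]
    · -- the ball crosses the grid point g = (j+1)*M
      set g : ℝ := ((j:ℝ)+1)*M with hg
      have hBsub : Ioo (x-r) (x+r) ⊆ Ioc (g - 2*r) g ∪ Ioo g (g + 2*r) := by
        intro y hy
        simp only [Set.mem_Ioo] at hy
        rcases le_or_gt y g with h | h
        · exact Or.inl ⟨by linarith [hy.1], h⟩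
        · exact Or.inr ⟨h, by linarith [hy.2]⟩
      -- a generic bound once we know both half-pieces integrate to ∫ over D
      have main : ∀ (c s : ℝ), 0 < s → Ioo (c-s) (c+s) ⊆ Ioo 0 M →
          volume (Ioo (c-s) (c+s)) = volume (Ioo (x-r) (x+r)) →
          (∀ f : ℝ → ℝ≥0∞,
            (∫⁻ y in Ioo (g - 2*r) g, f |y - 2*M*(round (y/(2*M)) : ℝ)|
              = ∫⁻ y in Ioo (c-s) (c+s), f y) ∧
            (∫⁻ y in Ioo g (g + 2*r), f |y - 2*M*(round (y/(2*M)) : ℝ)|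
              = ∫⁻ y in Ioo (c-s) (c+s), f y)) →
          ∃ c' s' : ℝ, 0 < s' ∧ Ioo (c'-s') (c'+s') ⊆ Ioo 0 M ∧
            ∀ f : ℝ → ℝ≥0∞,
              (∫⁻ y in Ioo (x-r) (x+r), f |y - 2*M*(round (y/(2*M)) : ℝ)|)
                  * volume (Ioo (c'-s') (c'+s'))
                ≤ 3 * volume (Ioo (x-r) (x+r)) * ∫⁻ y in Ioo (c'-s') (c'+s'), f y := by
        intro c s hs hDsub hvol hhalves
        refine ⟨c, s, hs, hDsub, ?_⟩
        intro f
        obtain ⟨hL, hR⟩ := hhalves f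
        have hsplit : ∫⁻ y in Ioo (x-r) (x+r), f |y - 2*M*(round (y/(2*M)) : ℝ)|
            ≤ 2 * ∫⁻ y in Ioo (c-s) (c+s), f y := by
          calc ∫⁻ y in Ioo (x-r) (x+r), f |y - 2*M*(round (y/(2*M)) : ℝ)|
              ≤ ∫⁻ y, f |y - 2*M*(round (y/(2*M)) : ℝ)|
                  ∂(volume.restrict (Ioc (g - 2*r) g) + volume.restrict (Ioo g (g + 2*r))) := by
                refine lintegral_mono' (le_trans (Measure.restrict_mono hBsub le_rfl) ?_) le_rfl
                exact Measure.restrict_union_le _ _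
            _ = (∫⁻ y in Ioc (g - 2*r) g, f |y - 2*M*(round (y/(2*M)) : ℝ)|)
                + ∫⁻ y in Ioo g (g + 2*r), f |y - 2*M*(round (y/(2*M)) : ℝ)| :=
                lintegral_add_measure _ _ _
            _ = (∫⁻ y in Ioo (g - 2*r) g, f |y - 2*M*(round (y/(2*M)) : ℝ)|)
                + ∫⁻ y in Ioo g (g + 2*r), f |y - 2*M*(round (y/(2*M)) : ℝ)| := by
                rw [← Measure.restrict_congr_set Ioo_ae_eq_Ioc]
            _ = 2 * ∫⁻ y in Ioo (c-s) (c+s), f y := by rw [hL, hR]; ring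
        calc (∫⁻ y in Ioo (x-r) (x+r), f |y - 2*M*(round (y/(2*M)) : ℝ)|)
              * volume (Ioo (c-s) (c+s))
            ≤ (2 * ∫⁻ y in Ioo (c-s) (c+s), f y) * volume (Ioo (c-s) (c+s)) :=
              mul_le_mul' hsplit le_rfl
          _ ≤ (3 * ∫⁻ y in Ioo (c-s) (c+s), f y) * volume (Ioo (c-s) (c+s)) :=
              mul_le_mul' (mul_le_mul' (by norm_num) le_rfl) le_rfl
          _ = 3 * volume (Ioo (c-s) (c+s)) * ∫⁻ y in Ioo (c-s) (c+s), f y := by ring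
          _ = 3 * volume (Ioo (x-r) (x+r)) * ∫⁻ y in Ioo (c-s) (c+s), f y := by rw [hvol]
      rcases Int.even_or_odd (j+1) with ⟨k, hk⟩ | ⟨k, hk⟩
      · -- g = 2kM; D = (0, 2r) = Ioo (r-r) (r+r)
        have hgr : g = 2*(k:ℝ)*M := by
          rw [hg, show ((j:ℝ)+1) = ((j+1 : ℤ):ℝ) by push_cast; ring, hk]
          push_cast; ring
        have hk1 : ((k-1 : ℤ):ℝ) = (k:ℝ)-1 := by push_cast; ring
        refine main r r hr ?_ ?_ ?_
        · intro y hy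
          simp only [Set.mem_Ioo] at hy ⊢
          constructor <;> nlinarith [hy.1, hy.2]
        · rw [Real.volume_Ioo, Real.volume_Ioo]; ring_nf
        · intro f
          constructor
          · have hp := piece_odd hM (k-1) (g - 2*r) g
              (by rw [hk1, hgr]; nlinarith) (by rw [hk1, hgr]; nlinarith) f
            rw [hp, show (2*((k-1 : ℤ):ℝ)+2)*M - g = r - r by rw [hk1, hgr]; ring,
              show (2*((k-1 : ℤ):ℝ)+2)*M - (g - 2*r) = r + r by rw [hk1, hgr]; ring]
          · have hp := piece_even hM k g (g + 2*r)
              (by rw [hgr]) (by rw [hgr]; nlinarith) f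
            rw [hp, show g - 2*(k:ℝ)*M = r - r by rw [hgr]; ring,
              show g + 2*r - 2*(k:ℝ)*M = r + r by rw [hgr]; ring]
      · -- g = (2k+1)M; D = (M-2r, M) = Ioo ((M-r)-r) ((M-r)+r)
        have hgr : g = (2*(k:ℝ)+1)*M := by
          rw [hg, show ((j:ℝ)+1) = ((j+1 : ℤ):ℝ) by push_cast; ring, hk]
          push_cast; ring
        refine main (M - r) r hr ?_ ?_ ?_
        · intro y hy
          simp only [Set.mem_Ioo] at hy ⊢
          constructor <;> nlinarith [hy.1, hy.2]
        · rw [Real.volume_Ioo, Real.volume_Ioo]; ring_nf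
        · intro f
          constructor
          · have hp := piece_even hM k (g - 2*r) g
              (by rw [hgr]; nlinarith) (by rw [hgr]) f
            rw [hp, show g - 2*r - 2*(k:ℝ)*M = (M - r) - r by rw [hgr]; ring,
              show g - 2*(k:ℝ)*M = (M - r) + r by rw [hgr]; ring]
          · have hp := piece_odd hM k g (g + 2*r)
              (by rw [hgr]) (by rw [hgr]; nlinarith) f
            rw [hp, show (2*(k:ℝ)+2)*M - (g + 2*r) = (M - r) - r by rw [hgr]; ring,
              show (2*(k:ℝ)+2)*M - g = (M - r) + r by rw [hgr]; ring]

/-! ### Transfer of the essential infimum -/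

private lemma essInf_le_comp {M : ℝ} {B D : Set ℝ}
    (hvD0 : volume D ≠ 0)
    (hkey : ∀ f : ℝ → ℝ≥0∞,
      (∫⁻ y in B, f |y - 2*M*(round (y/(2*M)) : ℝ)|) * volume D
        ≤ 3 * volume B * ∫⁻ y in D, f y)
    (f : ℝ → ℝ≥0∞) :
    essInf f (volume.restrict D)
      ≤ essInf (fun y => f |y - 2*M*(round (y/(2*M)) : ℝ)|) (volume.restrict B) := by
  set a := essInf f (volume.restrict D) with ha
  have h1 : ∀ᵐ y ∂(volume.restrict D), a ≤ f y := ae_essInf_le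
  have h1' : (volume.restrict D) {y | ¬ a ≤ f y} = 0 := by
    rw [← ae_iff]; exact h1
  obtain ⟨T, hNT, hTm, hT0⟩ := exists_measurable_superset_of_null h1'
  have hind := hkey (T.indicator 1)
  have hco : (fun y : ℝ => T.indicator (1 : ℝ → ℝ≥0∞) |y - 2*M*(round (y/(2*M)) : ℝ)|)
      = ((fun y : ℝ => |y - 2*M*(round (y/(2*M)) : ℝ)|) ⁻¹' T).indicator (1 : ℝ → ℝ≥0∞) := by
    funext y
    by_cases h : |y - 2*M*(round (y/(2*M)) : ℝ)| ∈ T <;>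
      simp [Set.indicator, h, Set.mem_preimage]
  have hTm' : MeasurableSet ((fun y : ℝ => |y - 2*M*(round (y/(2*M)) : ℝ)|) ⁻¹' T) :=
    (d_measurable M) hTm
  have hIeq : (∫⁻ y in B, T.indicator (1 : ℝ → ℝ≥0∞) |y - 2*M*(round (y/(2*M)) : ℝ)|)
      = (volume.restrict B) ((fun y : ℝ => |y - 2*M*(round (y/(2*M)) : ℝ)|) ⁻¹' T) := by
    rw [← lintegral_indicator_one hTm']
    exact lintegral_congr (fun y => congrFun hco y)
  rw [lintegral_indicator_one hTm, hT0, mul_zero, hIeq] at hind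
  have hnull : (volume.restrict B)
      ((fun y : ℝ => |y - 2*M*(round (y/(2*M)) : ℝ)|) ⁻¹' T) = 0 := by
    rcases mul_eq_zero.mp (nonpos_iff_eq_zero.mp hind) with h | h
    · exact h
    · exact absurd h hvD0
  have h3 : ∀ᵐ y ∂(volume.restrict B), a ≤ f |y - 2*M*(round (y/(2*M)) : ℝ)| := by
    rw [ae_iff]
    refine measure_mono_null ?_ hnull
    intro y hy
    exact hNT hy
  exact le_essInf_of_ae_le a h3

end AuxRefl

/-- Lemma 4.2: if `w` satisfies the `A_p` condition within
`(0, M)` with constant `C`, then its even `2M`-periodic reflection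
`ŵ(x) = w(dist(x, 2Mℤ))` is a global `A_p` weight on ℝ, with a global `A_p`
constant `C'` depending only on `C` and `p`. -/
theorem reflected_weight_global_Ap (p C : ℝ) (hp : 1 ≤ p) (hC : 0 < C) :
    ∃ C' > (0:ℝ), ∀ (w : ℝ → ℝ) (M : ℝ), 0 < M → (∀ x, 0 ≤ w x) →
      MeasureTheory.LocallyIntegrable w volume →
      (∀ x r : ℝ, 0 < r → Ioo (x - r) (x + r) ⊆ Ioo 0 M →
        ApOn p w (Ioo (x - r) (x + r)) C) →
      ∀ x r : ℝ, 0 < r →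
        ApOn p (fun y => w |y - 2*M*(round (y/(2*M)) : ℝ)|)
          (Ioo (x - r) (x + r)) C' := by
  refine ⟨3^p * C, by positivity, ?_⟩
  intro w M hM hw hloc hAp x r hr
  obtain ⟨c, s, hs, hDsub, hkey⟩ := key_lemma hM x r hr
  have hvB0 : volume (Ioo (x-r) (x+r)) ≠ 0 := by
    rw [Real.volume_Ioo]
    simp only [ne_eq, ENNReal.ofReal_eq_zero, not_le]
    linarith
  have hvBt : volume (Ioo (x-r) (x+r)) ≠ ⊤ := by
    rw [Real.volume_Ioo]; exact ENNReal.ofReal_ne_top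
  have hvD0 : volume (Ioo (c-s) (c+s)) ≠ 0 := by
    rw [Real.volume_Ioo]
    simp only [ne_eq, ENNReal.ofReal_eq_zero, not_le]
    linarith
  have hvDt : volume (Ioo (c-s) (c+s)) ≠ ⊤ := by
    rw [Real.volume_Ioo]; exact ENNReal.ofReal_ne_top
  have havg : ∀ f : ℝ → ℝ≥0∞,
      (∫⁻ y in Ioo (x-r) (x+r), f |y - 2*M*(round (y/(2*M)) : ℝ)|) / volume (Ioo (x-r) (x+r))
        ≤ 3 * ((∫⁻ y in Ioo (c-s) (c+s), f y) / volume (Ioo (c-s) (c+s))) := by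
    intro f
    rw [ENNReal.div_le_iff hvB0 hvBt]
    have h1 : ∫⁻ y in Ioo (x-r) (x+r), f |y - 2*M*(round (y/(2*M)) : ℝ)|
        ≤ 3 * volume (Ioo (x-r) (x+r)) * (∫⁻ y in Ioo (c-s) (c+s), f y)
          / volume (Ioo (c-s) (c+s)) :=
      (ENNReal.le_div_iff_mul_le (Or.inl hvD0) (Or.inl hvDt)).mpr (hkey f)
    refine le_trans h1 (le_of_eq ?_)
    rw [div_eq_mul_inv, div_eq_mul_inv]
    ring
  have hApD := hAp c s hs hDsub
  constructor
  · -- p = 1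
    intro hp1
    have hA1 := hApD.1 hp1
    have hinf := essInf_le_comp hvD0 hkey (fun t => ENNReal.ofReal (w t))
    show (∫⁻ y in Ioo (x-r) (x+r), ENNReal.ofReal (w |y - 2*M*(round (y/(2*M)) : ℝ)|))
        / volume (Ioo (x-r) (x+r))
      ≤ ENNReal.ofReal (3^p * C) *
        essInf (fun y => ENNReal.ofReal (w |y - 2*M*(round (y/(2*M)) : ℝ)|))
          (volume.restrict (Ioo (x-r) (x+r)))
    calc (∫⁻ y in Ioo (x-r) (x+r), ENNReal.ofReal (w |y - 2*M*(round (y/(2*M)) : ℝ)|))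
          / volume (Ioo (x-r) (x+r))
        ≤ 3 * ((∫⁻ y in Ioo (c-s) (c+s), ENNReal.ofReal (w y)) / volume (Ioo (c-s) (c+s))) :=
          havg (fun t => ENNReal.ofReal (w t))
      _ ≤ 3 * (ENNReal.ofReal C *
            essInf (fun t => ENNReal.ofReal (w t)) (volume.restrict (Ioo (c-s) (c+s)))) :=
          mul_le_mul' le_rfl hA1
      _ ≤ 3 * (ENNReal.ofReal C *
            essInf (fun y => ENNReal.ofReal (w |y - 2*M*(round (y/(2*M)) : ℝ)|))
              (volume.restrict (Ioo (x-r) (x+r)))) :=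
          mul_le_mul' le_rfl (mul_le_mul' le_rfl hinf)
      _ = ENNReal.ofReal (3^p * C) *
            essInf (fun y => ENNReal.ofReal (w |y - 2*M*(round (y/(2*M)) : ℝ)|))
              (volume.restrict (Ioo (x-r) (x+r))) := by
          rw [hp1, Real.rpow_one, ENNReal.ofReal_mul (by norm_num : (0:ℝ) ≤ 3),
            ENNReal.ofReal_ofNat, mul_assoc]
  · -- p ≠ 1
    intro hp1
    have hplt : 1 < p := lt_of_le_of_ne hp (Ne.symm hp1)
    have hA := hApD.2 hp1
    have h1 := havg (fun t => ENNReal.ofReal (w t))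
    have h2 := havg (fun t => ENNReal.ofReal (w t) ^ (1/(1-p)))
    set Aσ := (∫⁻ y in Ioo (c-s) (c+s), ENNReal.ofReal (w y) ^ (1/(1-p)))
        / volume (Ioo (c-s) (c+s)) with hAσ
    set Aσh := (∫⁻ y in Ioo (x-r) (x+r),
        ENNReal.ofReal (w |y - 2*M*(round (y/(2*M)) : ℝ)|) ^ (1/(1-p)))
        / volume (Ioo (x-r) (x+r)) with hAσh
    show (∫⁻ y in Ioo (x-r) (x+r), ENNReal.ofReal (w |y - 2*M*(round (y/(2*M)) : ℝ)|))
        / volume (Ioo (x-r) (x+r))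
      ≤ ENNReal.ofReal (3^p * C) * Aσh ^ (1-p)
    have h2' : Aσh ≤ 3 * Aσ := h2
    by_cases hz : Aσ = 0
    · have hzh : Aσh = 0 := by
        rw [hz, mul_zero] at h2'
        exact nonpos_iff_eq_zero.mp h2'
      rw [hzh, ENNReal.zero_rpow_of_neg (by linarith)]
      rw [ENNReal.mul_top (by
        simp only [ne_eq, ENNReal.ofReal_eq_zero, not_le]
        positivity)]
      exact le_top
    · have hanti : (3 * Aσ) ^ (1-p) ≤ Aσh ^ (1-p) := by
        rw [show (1-p) = -(p-1) by ring, ENNReal.rpow_neg, ENNReal.rpow_neg]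
        exact ENNReal.inv_le_inv.mpr (ENNReal.rpow_le_rpow h2' (by linarith))
      have hsplit : (3 * Aσ) ^ (1-p) = (3:ℝ≥0∞) ^ (1-p) * Aσ ^ (1-p) :=
        ENNReal.mul_rpow_of_ne_zero (by norm_num) hz _
      have hmono : Aσ ^ (1-p) ≤ (3:ℝ≥0∞) ^ (p-1) * Aσh ^ (1-p) := by
        have : Aσ ^ (1-p) = (3:ℝ≥0∞) ^ (p-1) * ((3:ℝ≥0∞) ^ (1-p) * Aσ ^ (1-p)) := by
          rw [← mul_assoc, ← ENNReal.rpow_add _ _ (by norm_num) (by norm_num)]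
          norm_num
        rw [this]
        exact mul_le_mul' le_rfl (hsplit ▸ hanti)
      calc (∫⁻ y in Ioo (x-r) (x+r), ENNReal.ofReal (w |y - 2*M*(round (y/(2*M)) : ℝ)|))
            / volume (Ioo (x-r) (x+r))
          ≤ 3 * ((∫⁻ y in Ioo (c-s) (c+s), ENNReal.ofReal (w y)) / volume (Ioo (c-s) (c+s))) :=
            h1
        _ ≤ 3 * (ENNReal.ofReal C * Aσ ^ (1-p)) := mul_le_mul' le_rfl hA
        _ ≤ 3 * (ENNReal.ofReal C * ((3:ℝ≥0∞) ^ (p-1) * Aσh ^ (1-p))) :=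
            mul_le_mul' le_rfl (mul_le_mul' le_rfl hmono)
        _ = (3 * (3:ℝ≥0∞) ^ (p-1)) * ENNReal.ofReal C * Aσh ^ (1-p) := by ring
        _ = ENNReal.ofReal (3^p * C) * Aσh ^ (1-p) := by
            have e1 : (3 : ℝ≥0∞) * (3:ℝ≥0∞) ^ (p-1) = (3:ℝ≥0∞) ^ p := by
              nth_rewrite 1 [show (3:ℝ≥0∞) = (3:ℝ≥0∞) ^ (1:ℝ) by rw [ENNReal.rpow_one]]
              rw [← ENNReal.rpow_add _ _ (by norm_num) (by norm_num)]
              norm_num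
            have e2 : ENNReal.ofReal (3^p * C) = (3:ℝ≥0∞) ^ p * ENNReal.ofReal C := by
              rw [ENNReal.ofReal_mul (by positivity), ← ENNReal.ofReal_rpow_of_pos
                (by norm_num : (0:ℝ) < 3), ENNReal.ofReal_ofNat]
            rw [e1, e2]
end

section
/- Let 1 ≤ p < ∞ and let dμ = w dx, where w is a nonnegative locally integrable function satisfying the A_p condition within a bounded open interval I₀ ⊂ ℝ. Then μ is p-admissible within ½I₀, where ½I₀ denotes the interval with the same midpoint as I₀ and half its length. -/
open MeasureTheory Set Filter
open scoped ENNReal NNReal Topology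

noncomputable section ApAuxSection

open MeasureTheory Set Filter
open scoped ENNReal

/-- Hölder inequality step: for an a.e. nonvanishing finite weight `W`,
`∫ G ≤ (∫ G^p W)^{1/p} (∫ W^{1/(1-p)})^{(p-1)/p}`. -/
lemma apaux_holder {W G : ℝ → ℝ≥0∞} (hW : AEMeasurable W volume) (hWfin : ∀ x, W x ≠ ⊤)
    (hG : AEMeasurable G volume) {B : Set ℝ}
    (hpos : ∀ᵐ t ∂(volume.restrict B), W t ≠ 0) {p : ℝ} (hp : 1 < p) :
    ∫⁻ t in B, G t ≤ (∫⁻ t in B, G t ^ p * W t) ^ (1/p) *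
      (∫⁻ t in B, W t ^ (1/(1-p))) ^ ((p-1)/p) := by
  have hpq : p.HolderConjugate (p/(p-1)) :=
    (Real.holderConjugate_iff_eq_conjExponent hp).2 rfl
  have hp0 : p ≠ 0 := (by linarith : (0:ℝ) < p).ne'
  have hp1 : p - 1 ≠ 0 := hpq.sub_one_ne_zero
  have hq : (p-1)/p = 1/(p/(p-1)) := by rw [one_div_div]
  have key := ENNReal.lintegral_mul_le_Lp_mul_Lq (volume.restrict B) hpq
    (f := fun t => G t * W t ^ (1/p)) (g := fun t => W t ^ (-(1/p)))
    ((hG.restrict).mul ((hW.restrict).pow_const (1/p)))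
    ((hW.restrict).pow_const (-(1/p)))
  have h0 : ∫⁻ t in B, G t =
      ∫⁻ t in B, ((fun t => G t * W t ^ (1/p)) * fun t => W t ^ (-(1/p))) t := by
    refine lintegral_congr_ae ?_
    filter_upwards [hpos] with t ht
    simp only [Pi.mul_apply]
    rw [mul_assoc, ← ENNReal.rpow_add _ _ ht (hWfin t), add_neg_cancel,
      ENNReal.rpow_zero, mul_one]
  have h1 : (∫⁻ t in B, (G t * W t ^ (1/p)) ^ p) = ∫⁻ t in B, G t ^ p * W t := by
    refine lintegral_congr fun t => ?_
    rw [ENNReal.mul_rpow_of_nonneg _ _ (by linarith : (0:ℝ) ≤ p), ← ENNReal.rpow_mul,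
      one_div_mul_cancel hp0, ENNReal.rpow_one]
  have h2 : (∫⁻ t in B, (W t ^ (-(1/p))) ^ (p/(p-1))) = ∫⁻ t in B, W t ^ (1/(1-p)) := by
    refine lintegral_congr fun t => ?_
    rw [← ENNReal.rpow_mul]
    congr 1
    have h1p : (1:ℝ) - p ≠ 0 := by intro h; apply hp1; linarith
    field_simp
    ring
  rw [h0, hq, ← h1, ← h2]
  exact key

/-- Rearrangement of the `A_p` inequality. -/
lemma apaux_rearrange {c m v S : ℝ≥0∞} {p : ℝ} (hp : 1 < p)
    (hv0 : v ≠ 0) (hvt : v ≠ ⊤)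
    (h : m / v ≤ c * (S / v) ^ (1 - p)) :
    m * S ^ (p-1) ≤ c * v ^ p := by
  have hp1 : (0:ℝ) ≤ p - 1 := by linarith
  have h1 : m / v * (S / v) ^ (p-1) ≤ c := by
    have h2 : (S/v) ^ ((1:ℝ) - p) = ((S/v) ^ (p-1))⁻¹ := by
      rw [show (1:ℝ) - p = -(p-1) by ring, ENNReal.rpow_neg]
    calc m / v * (S / v) ^ (p-1) ≤ c * ((S/v) ^ (p-1))⁻¹ * (S/v) ^ (p-1) :=
          mul_le_mul_left (h2 ▸ h) _
      _ = c * (((S/v) ^ (p-1))⁻¹ * (S/v) ^ (p-1)) := by rw [mul_assoc]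
      _ ≤ c * 1 := mul_le_mul_right (ENNReal.inv_mul_le_one _) _
      _ = c := mul_one c
  have hvp10 : v ^ (p-1) ≠ 0 := (ENNReal.rpow_pos (pos_iff_ne_zero.mpr hv0) hvt).ne'
  have hvp1t : v ^ (p-1) ≠ ⊤ := ENNReal.rpow_ne_top_of_nonneg hp1 hvt
  have hdm : (S/v) ^ (p-1) * v ^ (p-1) = S ^ (p-1) := by
    rw [ENNReal.div_rpow_of_nonneg _ _ hp1, ENNReal.div_mul_cancel hvp10 hvp1t]
  have hmv : m / v * v = m := ENNReal.div_mul_cancel hv0 hvt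
  have hvv : v ^ (p-1) * v = v ^ p := by
    nth_rewrite 2 [← ENNReal.rpow_one v]
    rw [← ENNReal.rpow_add _ _ hv0 hvt]
    norm_num
  have hkey : m / v * (S/v) ^ (p-1) * (v ^ (p-1) * v) = m * S ^ (p-1) := by
    calc m / v * (S/v) ^ (p-1) * (v ^ (p-1) * v)
        = ((S/v) ^ (p-1) * v ^ (p-1)) * (m / v * v) := by ring
      _ = S ^ (p-1) * (m / v * v) := by rw [hdm]
      _ = m * S ^ (p-1) := by rw [hmv]; ring
  calc m * S ^ (p-1) = m / v * (S/v) ^ (p-1) * (v ^ (p-1) * v) := hkey.symm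
    _ ≤ c * (v ^ (p-1) * v) := mul_le_mul_left h1 _
    _ = c * v ^ p := by rw [hvv]

/-- The left-hand side of the Poincaré inequality is bounded by the (Lebesgue)
integral of an upper gradient over the ball. -/
lemma apaux_lhs (μ : Measure ℝ) {a b : ℝ}
    (hm0 : μ (Ioo a b) ≠ 0) (hmt : μ (Ioo a b) ≠ ⊤)
    {u g : ℝ → ℝ} (hu : IntegrableOn u (Ioo a b) μ)
    (hg : IsUpperGradientOn g u (Ioo a b)) :
    PoinLHS μ u (Ioo a b) ≤ ∫⁻ t in Ioo a b, ENNReal.ofReal (g t) := by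
  set B := Ioo a b with hBdef
  set G := ∫⁻ t in B, ENNReal.ofReal (g t) with hGdef
  rcases eq_top_or_lt_top G with hGt | hGlt
  · rw [hGt]; exact le_top
  have hGne : G ≠ ⊤ := hGlt.ne
  have hBmeas : MeasurableSet B := measurableSet_Ioo
  have hmpos : (0:ℝ) < (μ B).toReal := ENNReal.toReal_pos hm0 hmt
  have pair : ∀ s ∈ B, ∀ t ∈ B, |u t - u s| ≤ G.toReal := by
    have main : ∀ s ∈ B, ∀ t ∈ B, s ≤ t → |u t - u s| ≤ G.toReal := by
      intro s hs t ht hst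
      have h2 : Icc s t ⊆ B := Icc_subset_Ioo hs.1 ht.2
      have h3 : ENNReal.ofReal |u t - u s| ≤ G :=
        (hg.2.2 s t hst h2).trans (lintegral_mono_set h2)
      calc |u t - u s| = (ENNReal.ofReal |u t - u s|).toReal := by
            rw [ENNReal.toReal_ofReal (abs_nonneg _)]
        _ ≤ G.toReal := ENNReal.toReal_mono hGne h3
    intro s hs t ht
    rcases le_total s t with h | h
    · exact main s hs t ht h
    · rw [abs_sub_comm]; exact main t ht s hs h
  have key : ∀ t ∈ B, |u t - ⨍ s in B, u s ∂μ| ≤ G.toReal := by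
    intro t ht
    have hconst : IntegrableOn (fun _ : ℝ => u t) B μ :=
      integrableOn_const hmt
    have hdiff : IntegrableOn (fun s => u t - u s) B μ := hconst.sub hu
    have h1 : u t - ⨍ s in B, u s ∂μ = ((μ B).toReal)⁻¹ * ∫ s in B, (u t - u s) ∂μ := by
      rw [integral_sub hconst hu, setIntegral_const, setAverage_eq, smul_eq_mul, smul_eq_mul, measureReal_def,
        mul_sub, ← mul_assoc, inv_mul_cancel₀ hmpos.ne', one_mul]
    have h2 : |∫ s in B, (u t - u s) ∂μ| ≤ G.toReal * (μ B).toReal := by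
      have hb : ∀ᵐ s ∂μ.restrict B, |u t - u s| ≤ G.toReal := by
        filter_upwards [ae_restrict_mem hBmeas] with s hs
        exact pair s hs t ht
      calc |∫ s in B, (u t - u s) ∂μ| ≤ ∫ s in B, |u t - u s| ∂μ := by
            simpa [Real.norm_eq_abs] using
              norm_integral_le_integral_norm (μ := μ.restrict B) (fun s => u t - u s)
        _ ≤ ∫ _ in B, G.toReal ∂μ := integral_mono_ae hdiff.abs
            (integrableOn_const hmt) hb
        _ = G.toReal * (μ B).toReal := by rw [setIntegral_const, smul_eq_mul, mul_comm, measureReal_def]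
    rw [h1, abs_mul, abs_inv, abs_of_pos hmpos]
    calc ((μ B).toReal)⁻¹ * |∫ s in B, (u t - u s) ∂μ|
        ≤ ((μ B).toReal)⁻¹ * (G.toReal * (μ B).toReal) := by
          exact mul_le_mul_of_nonneg_left h2 (inv_nonneg.2 hmpos.le)
      _ = G.toReal := by field_simp
  have h3 : (∫⁻ t in B, ENNReal.ofReal |u t - ⨍ s in B, u s ∂μ| ∂μ) ≤ G * μ B := by
    calc (∫⁻ t in B, ENNReal.ofReal |u t - ⨍ s in B, u s ∂μ| ∂μ)
        ≤ ∫⁻ _ in B, G ∂μ := by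
          refine lintegral_mono_ae ?_
          filter_upwards [ae_restrict_mem hBmeas] with t ht
          exact ENNReal.ofReal_le_of_le_toReal (key t ht)
      _ = G * μ B := setLIntegral_const _ _
  calc PoinLHS μ u B
      = (∫⁻ t in B, ENNReal.ofReal |u t - ⨍ s in B, u s ∂μ| ∂μ) / μ B := rfl
    _ ≤ G * μ B / μ B := ENNReal.div_le_div_right h3 _
    _ = G := by rw [mul_div_assoc, ENNReal.div_self hm0 hmt, mul_one]

end ApAuxSection

/-- Corollary 4.3: if `dμ = w dx` satisfies the `A_p`
condition within a bounded open interval `I₀`, then `μ` is `p`-admissible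
within `½I₀`. -/
theorem Ap_within_implies_admissible_within_half (p : ℝ) (hp : 1 ≤ p)
    (w : ℝ → ℝ) (hw : ∀ x, 0 ≤ w x)
    (hloc : MeasureTheory.LocallyIntegrable w volume)
    (x₀ R : ℝ) (hR : 0 < R)
    (hμ : IsMeasureOnR (volume.withDensity fun x => ENNReal.ofReal (w x)))
    (hAp : ApWithin p w (Ioo (x₀ - R) (x₀ + R))) :
    AdmissibleWithin (volume.withDensity fun x => ENNReal.ofReal (w x)) p
      (Ioo (x₀ - R/2) (x₀ + R/2)) := by
  obtain ⟨C, hC0, hApC⟩ := hAp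
  have hWm : AEMeasurable (fun x => ENNReal.ofReal (w x)) volume :=
    hloc.aestronglyMeasurable.aemeasurable.ennreal_ofReal
  have hWfin : ∀ t : ℝ, ENNReal.ofReal (w t) ≠ ⊤ := fun t => ENNReal.ofReal_ne_top
  set μ : Measure ℝ := volume.withDensity (fun x => ENNReal.ofReal (w x)) with hμdef
  have hμapp : ∀ a b : ℝ, μ (Ioo a b) = ∫⁻ t in Ioo a b, ENNReal.ofReal (w t) := by
    intro a b; rw [hμdef, withDensity_apply _ measurableSet_Ioo]
  have hvol : ∀ x r : ℝ, volume (Ioo (x - r) (x + r)) = ENNReal.ofReal (2*r) := by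
    intro x r; rw [Real.volume_Ioo]; congr 1; ring
  have hm0 : ∀ x r : ℝ, 0 < r → μ (Ioo (x - r) (x + r)) ≠ 0 :=
    fun x r hr => ((hμ (x-r) (x+r) (by linarith)).1).ne'
  have hmt : ∀ x r : ℝ, 0 < r → μ (Ioo (x - r) (x + r)) ≠ ⊤ :=
    fun x r hr => ((hμ (x-r) (x+r) (by linarith)).2).ne
  have hv0 : ∀ r : ℝ, 0 < r → ∀ x : ℝ, volume (Ioo (x - r) (x + r)) ≠ 0 := by
    intro r hr x
    rw [hvol]
    simp only [ne_eq, ENNReal.ofReal_eq_zero, not_le]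
    linarith
  have hvt : ∀ x r : ℝ, volume (Ioo (x - r) (x + r)) ≠ ⊤ := by
    intro x r; rw [hvol]; exact ENNReal.ofReal_ne_top
  have sigma_fin : ∀ x r : ℝ, 1 < p → 0 < r → Ioo (x - r) (x + r) ⊆ Ioo (x₀ - R) (x₀ + R) →
      (∫⁻ t in Ioo (x - r) (x + r), ENNReal.ofReal (w t) ^ (1/(1-p))) ≠ ⊤ := by
    intro x r hp1 hr hsub hS
    have hap := (hApC x r hr hsub).2 hp1.ne'
    rw [← hμapp] at hap
    rw [hS, ENNReal.top_div_of_ne_top (hvt x r), ENNReal.top_rpow_of_neg (by linarith),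
      mul_zero, le_zero_iff, ENNReal.div_eq_zero_iff] at hap
    rcases hap with h | h
    · exact hm0 x r hr h
    · exact hvt x r h
  have wpos : ∀ x r : ℝ, 1 < p → 0 < r → Ioo (x - r) (x + r) ⊆ Ioo (x₀ - R) (x₀ + R) →
      ∀ᵐ t ∂volume.restrict (Ioo (x - r) (x + r)), ENNReal.ofReal (w t) ≠ 0 := by
    intro x r hp1 hr hsub
    have h := ae_lt_top' ((hWm.pow_const (1/(1-p))).restrict)
      (sigma_fin x r hp1 hr hsub)
    filter_upwards [h] with t ht h0
    rw [h0, ENNReal.zero_rpow_of_neg (by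
      apply div_neg_of_pos_of_neg one_pos; linarith)] at ht
    exact lt_irrefl _ ht
  refine ⟨⟨ENNReal.ofReal C * (2:ℝ≥0∞) ^ p, ?_, ?_, ?_⟩, ?_⟩
  · exact ENNReal.mul_pos (by simp [ENNReal.ofReal_eq_zero]; linarith)
      (ENNReal.rpow_pos (by norm_num) (by norm_num)).ne'
  · exact lt_top_iff_ne_top.2 (ENNReal.mul_ne_top ENNReal.ofReal_ne_top
      (ENNReal.rpow_ne_top_of_nonneg (by linarith) (by norm_num)))
  · -- Doubling
    intro x r hr hsub
    have hgeo := (Set.Ioo_subset_Ioo_iff (by linarith : x - r < x + r)).1 hsub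
    have hrR : r ≤ R/2 := by
      have h1 := hgeo.1; have h2 := hgeo.2; linarith
    have hsub2 : Ioo (x - 2*r) (x + 2*r) ⊆ Ioo (x₀ - R) (x₀ + R) :=
      Ioo_subset_Ioo (by linarith [hgeo.1]) (by linarith [hgeo.2])
    have hv2 : volume (Ioo (x - 2*r) (x + 2*r)) = 2 * volume (Ioo (x - r) (x + r)) := by
      rw [hvol, hvol, show ((2:ℝ≥0∞)) = ENNReal.ofReal (2:ℝ) by simp,
        ← ENNReal.ofReal_mul (by norm_num)]
    rcases eq_or_lt_of_le hp with hp1 | hp1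
    · -- p = 1
      subst hp1
      have hap := (hApC x (2*r) (by linarith) hsub2).1 rfl
      rw [← hμapp] at hap
      set I := essInf (fun t => ENNReal.ofReal (w t))
        (volume.restrict (Ioo (x - 2*r) (x + 2*r))) with hIdef
      have h1 : μ (Ioo (x - 2*r) (x + 2*r)) ≤
          ENNReal.ofReal C * I * volume (Ioo (x - 2*r) (x + 2*r)) :=
        (ENNReal.div_le_iff (hv0 (2*r) (by linarith) x) (hvt x (2*r))).1 hap
      have hIle : ∀ᵐ t ∂volume.restrict (Ioo (x - r) (x + r)), I ≤ ENNReal.ofReal (w t) := by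
        have h2 : ∀ᵐ t ∂volume.restrict (Ioo (x - 2*r) (x + 2*r)),
            I ≤ ENNReal.ofReal (w t) := ae_essInf_le
        exact (ae_mono (Measure.restrict_mono
          (Ioo_subset_Ioo (by linarith) (by linarith)) le_rfl)) h2
      have h3 : I * volume (Ioo (x - r) (x + r)) ≤ μ (Ioo (x - r) (x + r)) := by
        rw [hμapp]
        calc I * volume (Ioo (x - r) (x + r))
            = ∫⁻ _ in Ioo (x - r) (x + r), I := (setLIntegral_const _ _).symm
          _ ≤ ∫⁻ t in Ioo (x - r) (x + r), ENNReal.ofReal (w t) := lintegral_mono_ae hIle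
      calc μ (Ioo (x - 2*r) (x + 2*r))
          ≤ ENNReal.ofReal C * I * volume (Ioo (x - 2*r) (x + 2*r)) := h1
        _ = ENNReal.ofReal C * 2 * (I * volume (Ioo (x - r) (x + r))) := by
            rw [hv2]; ring
        _ ≤ ENNReal.ofReal C * 2 * μ (Ioo (x - r) (x + r)) := mul_le_mul_right h3 _
        _ = ENNReal.ofReal C * (2:ℝ≥0∞) ^ (1:ℝ) * μ (Ioo (x - r) (x + r)) := by
            rw [ENNReal.rpow_one]
    · -- p > 1
      have hap := (hApC x (2*r) (by linarith) hsub2).2 hp1.ne'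
      rw [← hμapp] at hap
      set S := ∫⁻ t in Ioo (x - 2*r) (x + 2*r), ENNReal.ofReal (w t) ^ (1/(1-p)) with hSdef
      have hre := apaux_rearrange hp1 (hv0 (2*r) (by linarith) x) (hvt x (2*r)) hap
      have hposB : ∀ᵐ t ∂volume.restrict (Ioo (x - r) (x + r)),
          ENNReal.ofReal (w t) ≠ 0 := by
        have h := wpos x (2*r) hp1 (by linarith) hsub2
        exact (ae_mono (Measure.restrict_mono
          (Ioo_subset_Ioo (by linarith) (by linarith)) le_rfl)) h
      have hp0 : p ≠ 0 := by positivity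
      have hhold := apaux_holder hWm hWfin (G := fun _ => (1:ℝ≥0∞)) aemeasurable_const
        (B := Ioo (x - r) (x + r)) hposB hp1
      simp only [ENNReal.one_rpow, one_mul] at hhold
      rw [setLIntegral_one, ← hμapp] at hhold
      have hSB : (∫⁻ t in Ioo (x - r) (x + r), ENNReal.ofReal (w t) ^ (1/(1-p))) ≤ S := by
        rw [hSdef]
        exact lintegral_mono_set (Ioo_subset_Ioo (by linarith) (by linarith))
      have hhold2 : volume (Ioo (x - r) (x + r)) ≤
          (μ (Ioo (x - r) (x + r))) ^ (1/p) * S ^ ((p-1)/p) :=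
        hhold.trans (mul_le_mul_right (ENNReal.rpow_le_rpow hSB (by apply div_nonneg <;> linarith)) _)
      have hvp : volume (Ioo (x - r) (x + r)) ^ p ≤
          μ (Ioo (x - r) (x + r)) * S ^ (p-1) := by
        calc volume (Ioo (x - r) (x + r)) ^ p
            ≤ ((μ (Ioo (x - r) (x + r))) ^ (1/p) * S ^ ((p-1)/p)) ^ p :=
              ENNReal.rpow_le_rpow hhold2 (by linarith)
          _ = μ (Ioo (x - r) (x + r)) * S ^ (p-1) := by
              rw [ENNReal.mul_rpow_of_nonneg _ _ (by linarith), ← ENNReal.rpow_mul,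
                ← ENNReal.rpow_mul, one_div_mul_cancel hp0, div_mul_cancel₀ _ hp0,
                ENNReal.rpow_one]
      have hS0 : S ≠ 0 := by
        intro h0
        have hσ := (lintegral_eq_zero_iff' ((hWm.pow_const (1/(1-p))).restrict)).1 h0
        have hnz : ∀ t : ℝ, ENNReal.ofReal (w t) ^ (1/(1-p)) ≠ 0 := by
          intro t h
          rw [ENNReal.rpow_eq_zero_iff] at h
          rcases h with ⟨h1, h2⟩ | ⟨h1, h2⟩
          · have : 1/(1-p) < 0 := by apply div_neg_of_pos_of_neg one_pos; linarith
            linarith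
          · exact hWfin t h1
        have hfalse : ∀ᵐ t ∂volume.restrict (Ioo (x - 2*r) (x + 2*r)), False := by
          filter_upwards [hσ] with t ht
          exact hnz t (by simpa using ht)
        have hzero := ae_eq_bot.1 (eventually_false_iff_eq_bot.1 hfalse)
        apply hv0 (2*r) (by linarith) x
        rw [← Measure.restrict_apply_univ, hzero]
        simp
      have hSt : S ≠ ⊤ := sigma_fin x (2*r) hp1 (by linarith) hsub2
      have hX0 : S ^ (p-1) ≠ 0 := (ENNReal.rpow_pos (pos_iff_ne_zero.2 hS0) hSt).ne'
      have hXt : S ^ (p-1) ≠ ⊤ := ENNReal.rpow_ne_top_of_nonneg (by linarith) hSt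
      rw [← ENNReal.mul_le_mul_iff_left hX0 hXt]
      calc μ (Ioo (x - 2*r) (x + 2*r)) * S ^ (p-1)
          ≤ ENNReal.ofReal C * volume (Ioo (x - 2*r) (x + 2*r)) ^ p := hre
        _ = ENNReal.ofReal C * ((2:ℝ≥0∞) ^ p * volume (Ioo (x - r) (x + r)) ^ p) := by
            rw [hv2, ENNReal.mul_rpow_of_nonneg _ _ (by linarith)]
        _ ≤ ENNReal.ofReal C * ((2:ℝ≥0∞) ^ p * (μ (Ioo (x - r) (x + r)) * S ^ (p-1))) :=
            mul_le_mul_right (mul_le_mul_right hvp _) _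
        _ = ENNReal.ofReal C * (2:ℝ≥0∞) ^ p * μ (Ioo (x - r) (x + r)) * S ^ (p-1) := by
            ring
  · -- Poincaré
    refine ⟨2*(1+C), by linarith, 1, le_refl 1, ?_⟩
    intro x r hr hsub u g hu hg
    rw [one_mul] at hu hg ⊢
    have hgeo := (Set.Ioo_subset_Ioo_iff (by linarith : x - r < x + r)).1 hsub
    have hsub1 : Ioo (x - r) (x + r) ⊆ Ioo (x₀ - R) (x₀ + R) := by
      refine hsub.trans (Ioo_subset_Ioo (by linarith) (by linarith))
    have hlhs := apaux_lhs μ (hm0 x r hr) (hmt x r hr) hu hg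
    have hG : Measurable fun t => ENNReal.ofReal (g t) := hg.2.1.ennreal_ofReal
    have hvv : volume (Ioo (x - r) (x + r)) = ENNReal.ofReal (2*r) := hvol x r
    rcases eq_or_lt_of_le hp with hp1 | hp1
    · -- p = 1
      subst hp1
      have hap := (hApC x r hr hsub1).1 rfl
      rw [← hμapp] at hap
      set I := essInf (fun t => ENNReal.ofReal (w t))
        (volume.restrict (Ioo (x - r) (x + r))) with hIdef
      have hI0 : I ≠ 0 := by
        intro h0
        rw [h0, mul_zero, le_zero_iff, ENNReal.div_eq_zero_iff] at hap
        rcases hap with h | h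
        · exact hm0 x r hr h
        · exact hvt x r h
      have hIle : ∀ᵐ t ∂volume.restrict (Ioo (x - r) (x + r)),
          I ≤ ENNReal.ofReal (w t) := ae_essInf_le
      have hIv : I * volume (Ioo (x - r) (x + r)) ≤ μ (Ioo (x - r) (x + r)) := by
        rw [hμapp]
        calc I * volume (Ioo (x - r) (x + r))
            = ∫⁻ _ in Ioo (x - r) (x + r), I := (setLIntegral_const _ _).symm
          _ ≤ _ := lintegral_mono_ae hIle
      have hIt : I ≠ ⊤ := by
        intro ht
        have h2 := hIv
        rw [ht, ENNReal.top_mul (hv0 r hr x)] at h2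
        exact hmt x r hr (top_le_iff.1 h2)
      have hIinv : I⁻¹ ≤
          ENNReal.ofReal C * volume (Ioo (x - r) (x + r)) / μ (Ioo (x - r) (x + r)) := by
        rw [ENNReal.le_div_iff_mul_le (Or.inl (hm0 x r hr)) (Or.inl (hmt x r hr))]
        have h1 : μ (Ioo (x - r) (x + r)) ≤
            ENNReal.ofReal C * I * volume (Ioo (x - r) (x + r)) :=
          (ENNReal.div_le_iff (hv0 r hr x) (hvt x r)).1 hap
        calc I⁻¹ * μ (Ioo (x - r) (x + r))
            ≤ I⁻¹ * (ENNReal.ofReal C * I * volume (Ioo (x - r) (x + r))) :=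
              mul_le_mul_right h1 _
          _ = (I⁻¹ * I) * (ENNReal.ofReal C * volume (Ioo (x - r) (x + r))) := by ring
          _ = ENNReal.ofReal C * volume (Ioo (x - r) (x + r)) := by
              rw [ENNReal.inv_mul_cancel hI0 hIt, one_mul]
      have hGb : (∫⁻ t in Ioo (x - r) (x + r), ENNReal.ofReal (g t)) ≤
          I⁻¹ * ∫⁻ t in Ioo (x - r) (x + r), ENNReal.ofReal (g t) ∂μ := by
        have hA : (∫⁻ t in Ioo (x - r) (x + r), ENNReal.ofReal (g t) ∂μ) =
            ∫⁻ t in Ioo (x - r) (x + r), ENNReal.ofReal (w t) * ENNReal.ofReal (g t) := by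
          rw [hμdef, setLIntegral_withDensity_eq_lintegral_mul₀ hWm hG.aemeasurable
            measurableSet_Ioo]
          exact lintegral_congr fun t => rfl
        rw [hA, ← lintegral_const_mul' _ _ (ENNReal.inv_ne_top.2 hI0)]
        refine lintegral_mono_ae ?_
        filter_upwards [hIle] with t ht
        calc ENNReal.ofReal (g t) = (I⁻¹ * I) * ENNReal.ofReal (g t) := by
              rw [ENNReal.inv_mul_cancel hI0 hIt, one_mul]
          _ ≤ (I⁻¹ * ENNReal.ofReal (w t)) * ENNReal.ofReal (g t) :=
              mul_le_mul_left (mul_le_mul_right ht _) _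
          _ = I⁻¹ * (ENNReal.ofReal (w t) * ENNReal.ofReal (g t)) := by ring
      have hrhs : PoinRHS μ (fun t => ENNReal.ofReal (g t)) 1 (Ioo (x - r) (x + r)) =
          (∫⁻ t in Ioo (x - r) (x + r), ENNReal.ofReal (g t) ∂μ) / μ (Ioo (x - r) (x + r)) := by
        unfold PoinRHS
        rw [show (1:ℝ)/1 = 1 by norm_num, ENNReal.rpow_one]
        congr 1
        exact lintegral_congr fun t => ENNReal.rpow_one _
      rw [hrhs]
      calc PoinLHS μ u (Ioo (x - r) (x + r))
          ≤ ∫⁻ t in Ioo (x - r) (x + r), ENNReal.ofReal (g t) := hlhs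
        _ ≤ I⁻¹ * ∫⁻ t in Ioo (x - r) (x + r), ENNReal.ofReal (g t) ∂μ := hGb
        _ ≤ (ENNReal.ofReal C * volume (Ioo (x - r) (x + r)) / μ (Ioo (x - r) (x + r))) *
              ∫⁻ t in Ioo (x - r) (x + r), ENNReal.ofReal (g t) ∂μ :=
            mul_le_mul_left hIinv _
        _ = (ENNReal.ofReal C * volume (Ioo (x - r) (x + r))) *
              ((∫⁻ t in Ioo (x - r) (x + r), ENNReal.ofReal (g t) ∂μ) /
                μ (Ioo (x - r) (x + r))) := by
            rw [div_eq_mul_inv, div_eq_mul_inv]; ring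
        _ ≤ ENNReal.ofReal (2*(1+C)*r) *
              ((∫⁻ t in Ioo (x - r) (x + r), ENNReal.ofReal (g t) ∂μ) /
                μ (Ioo (x - r) (x + r))) := by
            refine mul_le_mul_left ?_ _
            rw [hvv, ← ENNReal.ofReal_mul (by linarith)]
            exact ENNReal.ofReal_le_ofReal (by nlinarith)
    · -- p > 1
      have hp0 : p ≠ 0 := by positivity
      have hap := (hApC x r hr hsub1).2 hp1.ne'
      rw [← hμapp] at hap
      set S := ∫⁻ t in Ioo (x - r) (x + r), ENNReal.ofReal (w t) ^ (1/(1-p)) with hSdef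
      have hre := apaux_rearrange hp1 (hv0 r hr x) (hvt x r) hap
      have hSle : S ^ (p-1) ≤
          ENNReal.ofReal C * volume (Ioo (x - r) (x + r)) ^ p / μ (Ioo (x - r) (x + r)) := by
        rw [ENNReal.le_div_iff_mul_le (Or.inl (hm0 x r hr)) (Or.inl (hmt x r hr)), mul_comm]
        exact hre
      have hposB := wpos x r hp1 hr hsub1
      have hhold := apaux_holder hWm hWfin hG.aemeasurable (B := Ioo (x - r) (x + r))
        hposB hp1
      have hA : (∫⁻ t in Ioo (x - r) (x + r),
            ENNReal.ofReal (g t) ^ p * ENNReal.ofReal (w t)) =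
          ∫⁻ t in Ioo (x - r) (x + r), ENNReal.ofReal (g t) ^ p ∂μ := by
        rw [hμdef, setLIntegral_withDensity_eq_lintegral_mul₀ hWm
          (hG.pow_const p).aemeasurable measurableSet_Ioo]
        exact lintegral_congr fun t => mul_comm _ _
      rw [hA] at hhold
      set A := ∫⁻ t in Ioo (x - r) (x + r), ENNReal.ofReal (g t) ^ p ∂μ with hAdef
      set m := μ (Ioo (x - r) (x + r)) with hmdef
      set v := volume (Ioo (x - r) (x + r)) with hvdef
      have hstep : A ^ (1/p) * S ^ ((p-1)/p) ≤
          (ENNReal.ofReal C) ^ (1/p) * v * (A / m) ^ (1/p) := by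
        have e1 : S ^ ((p-1)/p) = (S ^ (p-1)) ^ (1/p) := by
          rw [← ENNReal.rpow_mul, mul_one_div]
        calc A ^ (1/p) * S ^ ((p-1)/p)
            ≤ A ^ (1/p) * (ENNReal.ofReal C * v ^ p / m) ^ (1/p) := by
              rw [e1]
              exact mul_le_mul_right (ENNReal.rpow_le_rpow hSle (by positivity)) _
          _ = (A * (ENNReal.ofReal C * v ^ p / m)) ^ (1/p) := by
              rw [ENNReal.mul_rpow_of_nonneg _ _ (by positivity)]
          _ = ((ENNReal.ofReal C * v ^ p) * (A / m)) ^ (1/p) := by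
              congr 1
              rw [div_eq_mul_inv, div_eq_mul_inv]; ring
          _ = (ENNReal.ofReal C) ^ (1/p) * (v ^ p) ^ (1/p) * (A / m) ^ (1/p) := by
              rw [ENNReal.mul_rpow_of_nonneg _ _ (by positivity),
                ENNReal.mul_rpow_of_nonneg _ _ (by positivity)]
          _ = (ENNReal.ofReal C) ^ (1/p) * v * (A / m) ^ (1/p) := by
              rw [← ENNReal.rpow_mul, mul_one_div, div_self hp0, ENNReal.rpow_one]
      have hCb : (ENNReal.ofReal C) ^ (1/p) * v ≤ ENNReal.ofReal (2*(1+C)*r) := by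
        have h1 : (ENNReal.ofReal C) ^ (1/p) ≤ ENNReal.ofReal (1+C) := by
          calc (ENNReal.ofReal C) ^ (1/p)
              ≤ (ENNReal.ofReal (1+C)) ^ (1/p) :=
                ENNReal.rpow_le_rpow (ENNReal.ofReal_le_ofReal (by linarith)) (by positivity)
            _ ≤ (ENNReal.ofReal (1+C)) ^ (1:ℝ) := by
                refine ENNReal.rpow_le_rpow_of_exponent_le ?_ ?_
                · rw [← ENNReal.ofReal_one]
                  exact ENNReal.ofReal_le_ofReal (by linarith)
                · rw [div_le_one (by linarith)]; linarith
            _ = ENNReal.ofReal (1+C) := ENNReal.rpow_one _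
        calc (ENNReal.ofReal C) ^ (1/p) * v ≤ ENNReal.ofReal (1+C) * v :=
              mul_le_mul_left h1 _
          _ = ENNReal.ofReal (2*(1+C)*r) := by
              rw [hvv, ← ENNReal.ofReal_mul (by linarith)]
              congr 1; ring
      have hrhs : PoinRHS μ (fun t => ENNReal.ofReal (g t)) p (Ioo (x - r) (x + r)) =
          (A / m) ^ (1/p) := rfl
      rw [hrhs]
      calc PoinLHS μ u (Ioo (x - r) (x + r))
          ≤ ∫⁻ t in Ioo (x - r) (x + r), ENNReal.ofReal (g t) := hlhs
        _ ≤ A ^ (1/p) * S ^ ((p-1)/p) := hhold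
        _ ≤ (ENNReal.ofReal C) ^ (1/p) * v * (A / m) ^ (1/p) := hstep
        _ ≤ ENNReal.ofReal (2*(1+C)*r) * (A / m) ^ (1/p) := mul_le_mul_left hCb _
end

section
/- Let 1 ≤ p < ∞ and let μ be a measure on ℝ that is Lipschitz p-admissible within an open interval I₀ ⊂ ℝ. Then the restriction of μ to I₀ is absolutely continuous with respect to the Lebesgue measure on I₀. -/
open MeasureTheory Set Filter
open scoped ENNReal NNReal Topology

/- ## Auxiliary lemmas -/

noncomputable def auxU (U : Set ℝ) (a x : ℝ) : ℝ := (volume (Icc a x \ U)).toReal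

lemma auxU_vol_lt_top (U : Set ℝ) (a x : ℝ) : volume (Icc a x \ U) < ⊤ :=
  lt_of_le_of_lt (measure_mono (diff_subset)) (by simp [Real.volume_Icc])

lemma auxU_mono_le (U : Set ℝ) (a : ℝ) {x y : ℝ} (hxy : x ≤ y) :
    auxU U a x ≤ auxU U a y ∧ auxU U a y - auxU U a x ≤ y - x := by
  have h1 : Icc a x \ U ⊆ Icc a y \ U := diff_subset_diff_left (Icc_subset_Icc_right hxy)
  have h2 : Icc a y \ U ⊆ (Icc a x \ U) ∪ Ioc x y := by
    intro t ht
    rcases ht with ⟨⟨hat, hty⟩, htU⟩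
    by_cases h : t ≤ x
    · exact Or.inl ⟨⟨hat, h⟩, htU⟩
    · exact Or.inr ⟨lt_of_not_ge h, hty⟩
  constructor
  · exact ENNReal.toReal_mono (auxU_vol_lt_top U a y).ne (measure_mono h1)
  · have h3 : volume (Icc a y \ U) ≤ volume (Icc a x \ U) + ENNReal.ofReal (y - x) := by
      calc volume (Icc a y \ U) ≤ volume ((Icc a x \ U) ∪ Ioc x y) := measure_mono h2
        _ ≤ volume (Icc a x \ U) + volume (Ioc x y) := measure_union_le _ _
        _ = volume (Icc a x \ U) + ENNReal.ofReal (y - x) := by rw [Real.volume_Ioc]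
    have h4 := ENNReal.toReal_mono (by
      exact ENNReal.add_ne_top.2 ⟨(auxU_vol_lt_top U a x).ne, ENNReal.ofReal_ne_top⟩) h3
    rw [ENNReal.toReal_add (auxU_vol_lt_top U a x).ne ENNReal.ofReal_ne_top] at h4
    rw [ENNReal.toReal_ofReal (by linarith : (0:ℝ) ≤ y - x)] at h4
    unfold auxU
    linarith

lemma auxU_lip (U : Set ℝ) (a : ℝ) : LipschitzWith 1 (auxU U a) := by
  rw [lipschitzWith_iff_dist_le_mul]
  intro x y
  rcases le_total x y with h | h
  · obtain ⟨h1, h2⟩ := auxU_mono_le U a h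
    rw [Real.dist_eq, abs_sub_comm, abs_of_nonneg (by linarith), Real.dist_eq,
      abs_sub_comm, abs_of_nonneg (by linarith)]
    push_cast
    linarith
  · obtain ⟨h1, h2⟩ := auxU_mono_le U a h
    rw [Real.dist_eq, abs_of_nonneg (by linarith), Real.dist_eq, abs_of_nonneg (by linarith)]
    push_cast
    linarith

lemma auxU_bounds (U : Set ℝ) (hU : volume U < ⊤) (a x : ℝ) (hax : a ≤ x) :
    x - a - (volume U).toReal ≤ auxU U a x ∧ auxU U a x ≤ x - a := by
  constructor
  · have h : Icc a x ⊆ (Icc a x \ U) ∪ U := by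
      intro t ht; by_cases htU : t ∈ U
      · exact Or.inr htU
      · exact Or.inl ⟨ht, htU⟩
    have h2 : volume (Icc a x) ≤ volume (Icc a x \ U) + volume U :=
      le_trans (measure_mono h) (measure_union_le _ _)
    have h3 := ENNReal.toReal_mono
      (ENNReal.add_ne_top.2 ⟨(auxU_vol_lt_top U a x).ne, hU.ne⟩) h2
    rw [ENNReal.toReal_add (auxU_vol_lt_top U a x).ne hU.ne, Real.volume_Icc,
      ENNReal.toReal_ofReal (by linarith)] at h3
    unfold auxU; linarith
  · have := ENNReal.toReal_mono (a := volume (Icc a x \ U)) (b := volume (Icc a x))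
      (by simp [Real.volume_Icc]) (measure_mono diff_subset)
    rw [Real.volume_Icc, ENNReal.toReal_ofReal (by linarith)] at this
    exact this

lemma auxU_eventually_const {U : Set ℝ} (hUo : IsOpen U) {x : ℝ} (hx : x ∈ U) (a : ℝ) :
    ∀ᶠ y in 𝓝 x, auxU U a y = auxU U a x := by
  obtain ⟨δ, hδ, hball⟩ := Metric.isOpen_iff.1 hUo x hx
  have key : ∀ z w : ℝ, z ≤ w → z ∈ Metric.ball x δ → w ∈ Metric.ball x δ →
      Icc a w \ U = Icc a z \ U := by
    intro z w hzw hz hw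
    apply Subset.antisymm
    · rintro t ⟨⟨hat, htw⟩, htU⟩
      refine ⟨⟨hat, ?_⟩, htU⟩
      by_contra h
      push_neg at h
      apply htU
      apply hball
      rw [Metric.mem_ball, Real.dist_eq] at hz hw ⊢
      rw [abs_lt] at hz hw ⊢
      constructor <;> [linarith; linarith]
    · exact diff_subset_diff_left (Icc_subset_Icc_right hzw)
  filter_upwards [Metric.ball_mem_nhds x hδ] with y hy
  rcases le_total x y with h | h
  · unfold auxU; rw [key x y h (Metric.mem_ball_self hδ) hy]
  · unfold auxU; rw [key y x h hy (Metric.mem_ball_self hδ)]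

lemma eLip_le_one {u : ℝ → ℝ} (hu : LipschitzWith 1 u) (s : Set ℝ) (x : ℝ) :
    eLipWithin u s x ≤ 1 := by
  refine Filter.limsup_le_of_le (h := ?_)
  filter_upwards with y
  rcases eq_or_ne y x with rfl | hyx
  · simp
  · have h1 : |u y - u x| ≤ |y - x| := by
      have := hu.dist_le_mul y x
      rwa [Real.dist_eq, Real.dist_eq, NNReal.coe_one, one_mul] at this
    have h2 : |u y - u x| / |y - x| ≤ 1 :=
      div_le_one_of_le₀ h1 (abs_nonneg _)
    calc ENNReal.ofReal (|u y - u x| / |y - x|) ≤ ENNReal.ofReal 1 :=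
          ENNReal.ofReal_le_ofReal h2
      _ = 1 := ENNReal.ofReal_one

lemma eLip_eq_zero {u : ℝ → ℝ} {x : ℝ}
    (hconst : ∀ᶠ y in 𝓝 x, u y = u x) (s : Set ℝ) :
    eLipWithin u s x = 0 := by
  refine le_antisymm ?_ zero_le
  refine Filter.limsup_le_of_le (h := ?_)
  filter_upwards [eventually_nhdsWithin_of_eventually_nhds hconst] with y hy
  simp [hy]


set_option maxHeartbeats 1600000 in
/-- Corollary 4.5: if `μ` is Lipschitz `p`-admissible
within an open interval `I₀ ⊆ ℝ`, then `μ` restricted to `I₀` is absolutely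
continuous with respect to Lebesgue measure. -/
theorem Lipschitz_admissible_implies_absolutely_continuous (p : ℝ)
    (hp : 1 ≤ p) (μ : Measure ℝ) (hμ : IsMeasureOnR μ)
    (I₀ : Set ℝ) (hopen : IsOpen I₀) (hconn : I₀.OrdConnected)
    (hadm : LipAdmissibleWithin μ p I₀) :
    μ.restrict I₀ ≪ volume := by
  have hp0 : 0 < p := lt_of_lt_of_le one_pos hp
  have hp0' : p ≠ 0 := hp0.ne'
  have hinvp : (0:ℝ) ≤ 1/p := by positivity
  obtain ⟨⟨Cd, hCd0, hCdtop, hD⟩, C, hC, lam, hlam, hP⟩ := hadm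
  intro s hs
  obtain ⟨t, hst, htm, htv⟩ := exists_measurable_superset_of_null hs
  have hred : μ.restrict I₀ s ≤ μ (t ∩ I₀) := by
    rw [← Measure.restrict_apply htm]
    exact measure_mono hst
  set E : Set ℝ := t ∩ I₀ with hEdef
  have hEmeas : MeasurableSet E := htm.inter hopen.measurableSet
  have hEI : E ⊆ I₀ := inter_subset_right
  have hEvol : volume E = 0 := measure_mono_null inter_subset_left htv
  suffices hgoal : μ E = 0 by
    exact le_antisymm (hred.trans_eq hgoal) zero_le
  by_contra hE
  haveI : IsLocallyFiniteMeasure μ :=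
    ⟨fun x => ⟨Ioo (x-1) (x+1), Ioo_mem_nhds (by linarith) (by linarith),
      (hμ _ _ (by linarith)).2⟩⟩
  -- density point
  have hdens := Besicovitch.ae_tendsto_measure_inter_div_of_measurableSet μ hEmeas
  obtain ⟨x₀, hx₀E, hx₀⟩ :=
    Measure.exists_mem_of_measure_ne_zero_of_ae hE (ae_restrict_of_ae hdens)
  simp only [Set.indicator_of_mem hx₀E, Pi.one_apply] at hx₀
  have hx₀I : x₀ ∈ I₀ := hEI hx₀E
  -- constants
  have hCd3 : (Cd^3 : ℝ≥0∞) ≠ 0 := pow_ne_zero _ hCd0.ne'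
  have hCd3t : (Cd^3 : ℝ≥0∞) ≠ ⊤ := ENNReal.pow_ne_top hCdtop.ne
  set A₀ : ℝ≥0∞ := ENNReal.ofReal (1/8) * (Cd^3)⁻¹ with hA₀
  have hA₀0 : A₀ ≠ 0 := by
    apply mul_ne_zero
    · simp only [ne_eq, ENNReal.ofReal_eq_zero, not_le]; norm_num
    · simp [ENNReal.inv_ne_zero, hCd3t]
  have hA₀t : A₀ ≠ ⊤ := by
    apply ENNReal.mul_ne_top ENNReal.ofReal_ne_top
    simp [hCd3]
  set D : ℝ≥0∞ := ENNReal.ofReal C * Cd ^ (1/p) with hDdef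
  have hD0 : D ≠ 0 := by
    apply mul_ne_zero
    · simp only [ne_eq, ENNReal.ofReal_eq_zero, not_le]; linarith
    · exact (ENNReal.rpow_pos hCd0 hCdtop.ne).ne'
  have hDt : D ≠ ⊤ :=
    ENNReal.mul_ne_top ENNReal.ofReal_ne_top (ENNReal.rpow_ne_top_of_nonneg hinvp hCdtop.ne)
  set β : ℝ≥0∞ := A₀ / D with hβ
  have hβ0 : 0 < β := ENNReal.div_pos hA₀0 hDt
  have hβt : β ≠ ⊤ := (ENNReal.div_lt_top hA₀t hD0).ne
  set η : ℝ≥0∞ := β ^ p with hη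
  have hη0 : 0 < η := ENNReal.rpow_pos hβ0 hβt
  set η₂ : ℝ≥0∞ := (min η 1) / 2 with hη₂
  have hmin0 : min η 1 ≠ 0 := by
    simp only [ne_eq, min_eq_iff, not_or]
    constructor
    · rintro ⟨h, -⟩; exact hη0.ne' h
    · rintro ⟨h, -⟩; exact one_ne_zero h
  have hmint : min η 1 ≠ ⊤ := ne_top_of_le_ne_top ENNReal.one_ne_top (min_le_right _ _)
  have hη₂0 : η₂ ≠ 0 := by
    simp [hη₂, ENNReal.div_eq_zero_iff, hmin0]
  have hη₂η : η₂ < η :=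
    lt_of_lt_of_le (ENNReal.half_lt_self hmin0 hmint) (min_le_left _ _)
  have hη₂1 : η₂ ≤ 1 :=
    le_trans (le_of_lt (ENNReal.half_lt_self hmin0 hmint)) (min_le_right _ _)
  -- choose the radius
  obtain ⟨δ₀, hδ₀, hball₀⟩ := Metric.isOpen_iff.1 hopen x₀ hx₀I
  have hsub1 : (1:ℝ≥0∞) - η₂ < 1 := ENNReal.sub_lt_self ENNReal.one_ne_top one_ne_zero hη₂0
  have hev : ∀ᶠ ρ in 𝓝[>] (0:ℝ),
      1 - η₂ < μ (E ∩ Metric.closedBall x₀ ρ) / μ (Metric.closedBall x₀ ρ) :=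
    hx₀.eventually_const_lt hsub1
  rw [eventually_nhdsWithin_iff, Metric.eventually_nhds_iff] at hev
  obtain ⟨ρ₀, hρ₀, hρev⟩ := hev
  have hlam0 : 0 < lam := lt_of_lt_of_le one_pos hlam
  set r : ℝ := min (δ₀ / (2 * (2*lam + 2))) (ρ₀ / (2 * lam)) with hrdef
  have hr : 0 < r := by
    apply lt_min <;> positivity
  have hr1 : r ≤ δ₀ / (2 * (2*lam + 2)) := min_le_left _ _
  have hr2 : r ≤ ρ₀ / (2 * lam) := min_le_right _ _
  have h2lr : 2 * lam * r < δ₀ := by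
    rw [le_div_iff₀ (by positivity)] at hr1
    nlinarith
  -- the key inclusions
  have hI : Ioo (x₀ - 2*lam*r) (x₀ + 2*lam*r) ⊆ I₀ := by
    intro y hy
    apply hball₀
    rw [Metric.mem_ball, Real.dist_eq, abs_lt]
    rcases hy with ⟨h1, h2⟩
    constructor <;> linarith
  have hIoo_sub : ∀ c ρ : ℝ, |c - x₀| + ρ ≤ 2*lam*r → Ioo (c - ρ) (c + ρ) ⊆ I₀ := by
    intro c ρ hcρ y hy
    apply hI
    rcases hy with ⟨h1, h2⟩
    obtain ⟨ha1, ha2⟩ := abs_le.1 (show |c - x₀| ≤ 2*lam*r - ρ by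
      linarith [abs_nonneg (c - x₀)])
    constructor <;> linarith
  set Λ : Set ℝ := Ioo (x₀ - lam*r) (x₀ + lam*r) with hΛdef
  set B : Set ℝ := Ioo (x₀ - r) (x₀ + r) with hBdef
  have hBI : B ⊆ I₀ := by
    apply hIoo_sub x₀ r
    rw [sub_self, abs_zero]
    nlinarith
  have hΛI : Λ ⊆ I₀ := by
    apply hIoo_sub x₀ (lam*r)
    rw [sub_self, abs_zero]
    nlinarith
  have hB0 : μ B ≠ 0 := (hμ _ _ (by linarith)).1.ne'
  have hBt : μ B ≠ ⊤ := (hμ _ _ (by linarith)).2.ne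
  have hΛ0 : μ Λ ≠ 0 := (hμ _ _ (by nlinarith)).1.ne'
  have hΛt : μ Λ ≠ ⊤ := (hμ _ _ (by nlinarith)).2.ne
  -- density at scale lam * r
  set cB : Set ℝ := Metric.closedBall x₀ (lam*r) with hcBdef
  have hcBIcc : cB = Icc (x₀ - lam*r) (x₀ + lam*r) := Real.closedBall_eq_Icc
  have hρlt : |lam * r - 0| < ρ₀ := by
    rw [sub_zero, abs_of_pos (by positivity)]
    rw [le_div_iff₀ (by positivity)] at hr2
    nlinarith
  have hratio : 1 - η₂ < μ (E ∩ cB) / μ cB := hρev hρlt (mem_Ioi.2 (by positivity))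
  have hcBt : μ cB ≠ ⊤ := by
    refine (lt_of_le_of_lt (measure_mono ?_) (hμ (x₀ - 2*lam*r) (x₀ + 2*lam*r)
      (by nlinarith)).2).ne
    rw [hcBIcc]
    apply Icc_subset_Ioo <;> nlinarith
  have hcB0 : μ cB ≠ 0 := by
    refine fun h => hΛ0 (le_antisymm ?_ zero_le)
    rw [← h]
    exact measure_mono (hcBIcc ▸ Ioo_subset_Icc_self)
  have hEcB : (1 - η₂) * μ cB ≤ μ (E ∩ cB) :=
    (ENNReal.le_div_iff_mul_le (Or.inl hcB0) (Or.inl hcBt)).1 hratio.le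
  have hdiffE : μ (cB \ E) ≤ η₂ * μ cB := by
    have hadd : μ (cB ∩ E) + μ (cB \ E) = μ cB := measure_inter_add_diff cB hEmeas
    have e : (1 - η₂) * μ cB + η₂ * μ cB = μ cB := by
      rw [← add_mul, tsub_add_cancel_of_le hη₂1, one_mul]
    have h1 : (1 - η₂) * μ cB + μ (cB \ E) ≤ (1 - η₂) * μ cB + η₂ * μ cB := by
      calc (1 - η₂) * μ cB + μ (cB \ E) ≤ μ (E ∩ cB) + μ (cB \ E) :=
            add_le_add hEcB le_rfl
        _ = μ cB := by rw [inter_comm]; exact hadd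
        _ = (1 - η₂) * μ cB + η₂ * μ cB := e.symm
    have hfin : (1 - η₂) * μ cB ≠ ⊤ :=
      ENNReal.mul_ne_top (ne_top_of_le_ne_top ENNReal.one_ne_top tsub_le_self) hcBt
    exact (ENNReal.add_le_add_iff_left hfin).1 h1
  -- the open superset U of E
  obtain ⟨U, hEU, hUo, hUv⟩ := Set.exists_isOpen_lt_of_lt E (ENNReal.ofReal (r/8))
    (by rw [hEvol]; exact ENNReal.ofReal_pos.2 (by positivity))
  have hUt : volume U < ⊤ := lt_of_lt_of_le hUv le_top
  set εU : ℝ := (volume U).toReal with hεUdef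
  have hεU0 : (0:ℝ) ≤ εU := ENNReal.toReal_nonneg
  have hεUlt : εU < r/8 := by
    rw [hεUdef]
    exact (ENNReal.lt_ofReal_iff_toReal_lt hUt.ne).1 hUv
  set a : ℝ := x₀ - lam*r with hadef
  set u : ℝ → ℝ := auxU U a with hudef
  -- apply the Lipschitz Poincaré inequality
  have hulip : LipschitzOnWith 1 u Λ := by
    rw [hudef]
    exact (auxU_lip U a).lipschitzOnWith
  have key := hP x₀ r hr hBI u 1 hulip
  -- the average
  set m : ℝ := ⨍ s in B, u s ∂μ with hm
  have hux : ∀ x ∈ B, |u x - (x - a)| ≤ εU := by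
    intro x hx
    rcases hx with ⟨h1, h2⟩
    obtain ⟨hb1, hb2⟩ := auxU_bounds U hUt a x (by rw [hadef]; nlinarith)
    rw [abs_le]
    constructor <;> [linarith; linarith]
  -- the subinterval where |u - m| is large
  obtain ⟨cS, hcSd, hcSlow⟩ : ∃ cS : ℝ, |cS - x₀| ≤ 3*r/4 ∧
      ∀ x ∈ Ioo (cS - r/4) (cS + r/4), r/8 ≤ |u x - m| := by
    rcases le_total (m + a) x₀ with hc | hc
    · refine ⟨x₀ + 3*r/4, by rw [add_sub_cancel_left, abs_of_nonneg (by linarith)], ?_⟩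
      intro x hx
      rcases hx with ⟨h1, h2⟩
      have hxB : x ∈ B := ⟨by linarith, by linarith⟩
      have h3 := abs_le.1 (hux x hxB)
      have h4 : r/8 ≤ u x - m := by linarith [h3.1]
      linarith [le_abs_self (u x - m)]
    · refine ⟨x₀ - 3*r/4, by rw [sub_sub_cancel_left, abs_neg, abs_of_nonneg (by linarith)], ?_⟩
      intro x hx
      rcases hx with ⟨h1, h2⟩
      have hxB : x ∈ B := ⟨by linarith, by linarith⟩
      have h3 := abs_le.1 (hux x hxB)
      have h4 : r/8 ≤ m - u x := by linarith [h3.2]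
      linarith [neg_abs_le (u x - m)]
  set S : Set ℝ := Ioo (cS - r/4) (cS + r/4) with hSdef
  obtain ⟨habs1, habs2⟩ := abs_le.1 hcSd
  have hSI₀ : ∀ ρ : ℝ, 0 < ρ → ρ ≤ r → Ioo (cS - ρ) (cS + ρ) ⊆ I₀ := by
    intro ρ h1 h2
    apply hIoo_sub
    nlinarith [hcSd]
  have hd1 := hD cS (r/4) (by positivity) (hSI₀ _ (by positivity) (by linarith))
  have hd2 := hD cS (2*(r/4)) (by positivity) (hSI₀ _ (by positivity) (by linarith))
  have hd3 := hD cS (2*(2*(r/4))) (by positivity) (hSI₀ _ (by positivity) (by linarith))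
  have hchain : μ B ≤ Cd^3 * μ S := by
    calc μ B ≤ μ (Ioo (cS - 2*(2*(2*(r/4)))) (cS + 2*(2*(2*(r/4))))) := by
          apply measure_mono
          intro y hy
          rcases hy with ⟨h1, h2⟩
          constructor <;> nlinarith
      _ ≤ Cd * μ (Ioo (cS - 2*(2*(r/4))) (cS + 2*(2*(r/4)))) := hd3
      _ ≤ Cd * (Cd * μ (Ioo (cS - 2*(r/4)) (cS + 2*(r/4)))) := mul_le_mul_right hd2 _
      _ ≤ Cd * (Cd * (Cd * μ S)) := mul_le_mul_right (mul_le_mul_right hd1 _) _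
      _ = Cd^3 * μ S := by ring
  have hSB : S ⊆ B := by
    intro y hy
    rcases hy with ⟨h1, h2⟩
    constructor <;> nlinarith
  -- lower bound for the LHS
  have humeas : Measurable (fun t => ENNReal.ofReal |u t - m|) :=
    (((auxU_lip U a).continuous.sub continuous_const).abs.measurable).ennreal_ofReal
  have hLHS : ENNReal.ofReal (r/8) * (Cd^3)⁻¹ ≤ PoinLHS μ u B := by
    have h1 : ENNReal.ofReal (r/8) * μ S ≤ ∫⁻ t in B, ENNReal.ofReal |u t - m| ∂μ := by
      calc ENNReal.ofReal (r/8) * μ S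
          = ∫⁻ _ in S, ENNReal.ofReal (r/8) ∂μ := (setLIntegral_const S _).symm
        _ ≤ ∫⁻ t in S, ENNReal.ofReal |u t - m| ∂μ :=
            setLIntegral_mono humeas (fun x hx => ENNReal.ofReal_le_ofReal (hcSlow x hx))
        _ ≤ ∫⁻ t in B, ENNReal.ofReal |u t - m| ∂μ := lintegral_mono_set hSB
    simp only [PoinLHS]
    rw [← hm]
    calc ENNReal.ofReal (r/8) * (Cd^3)⁻¹
        ≤ ENNReal.ofReal (r/8) * (μ S / μ B) := by
          apply mul_le_mul_right
          rw [ENNReal.le_div_iff_mul_le (Or.inl hB0) (Or.inl hBt)]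
          calc (Cd^3)⁻¹ * μ B ≤ (Cd^3)⁻¹ * (Cd^3 * μ S) := mul_le_mul_right hchain _
            _ = μ S := by rw [← mul_assoc, ENNReal.inv_mul_cancel hCd3 hCd3t, one_mul]
      _ = ENNReal.ofReal (r/8) * μ S / μ B := (mul_div_assoc _ _ _).symm
      _ ≤ _ := ENNReal.div_le_div_right h1 _
  -- upper bound for the RHS
  have hdblΛ : μ cB ≤ Cd * μ Λ := by
    calc μ cB ≤ μ (Ioo (x₀ - 2*(lam*r)) (x₀ + 2*(lam*r))) := by
          apply measure_mono
          rw [hcBIcc]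
          apply Icc_subset_Ioo <;> nlinarith
      _ ≤ Cd * μ Λ := hD x₀ (lam*r) (by positivity) hΛI
  have hg1 : ∀ x, eLipWithin u Λ x ≤ 1 := eLip_le_one (auxU_lip U a) Λ
  have hgU : ∀ x ∈ U, eLipWithin u Λ x = 0 := fun x hx =>
    eLip_eq_zero (auxU_eventually_const hUo hx a) Λ
  have hRHS : PoinRHS μ (eLipWithin u Λ) p Λ ≤ (η₂ * Cd) ^ (1/p) := by
    simp only [PoinRHS]
    apply ENNReal.rpow_le_rpow _ hinvp
    rw [ENNReal.div_le_iff hΛ0 hΛt]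
    calc ∫⁻ x in Λ, eLipWithin u Λ x ^ p ∂μ
        ≤ ∫⁻ x in Λ, (Uᶜ).indicator (fun _ => (1:ℝ≥0∞)) x ∂μ := by
          apply lintegral_mono
          intro x
          dsimp only
          by_cases hxU : x ∈ U
          · rw [hgU x hxU, ENNReal.zero_rpow_of_pos hp0,
              indicator_of_notMem (by simpa using hxU)]
          · rw [indicator_of_mem (by simpa using hxU)]
            exact ENNReal.rpow_le_one (hg1 x) hp0.le
      _ = μ (Uᶜ ∩ Λ) := by
          rw [lintegral_indicator_const hUo.measurableSet.compl, one_mul,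
            Measure.restrict_apply hUo.measurableSet.compl]
      _ ≤ μ (cB \ E) := by
          apply measure_mono
          rintro y ⟨hyU, hyΛ⟩
          exact ⟨hcBIcc ▸ Ioo_subset_Icc_self hyΛ, fun hyE => hyU (hEU hyE)⟩
      _ ≤ η₂ * μ cB := hdiffE
      _ ≤ η₂ * (Cd * μ Λ) := mul_le_mul_right hdblΛ _
      _ = η₂ * Cd * μ Λ := by ring
  -- combine
  have hfinal : ENNReal.ofReal (r/8) * (Cd^3)⁻¹ ≤ ENNReal.ofReal (C*r) * (η₂*Cd)^(1/p) :=
    hLHS.trans (key.trans (mul_le_mul_right hRHS _))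
  have hor0 : ENNReal.ofReal r ≠ 0 := by
    simp only [ne_eq, ENNReal.ofReal_eq_zero, not_le]; linarith
  have hc1 : ENNReal.ofReal (r/8) = ENNReal.ofReal r * ENNReal.ofReal (1/8) := by
    rw [show r/8 = r * (1/8) by ring, ENNReal.ofReal_mul hr.le]
  have hc2 : ENNReal.ofReal (C*r) = ENNReal.ofReal r * ENNReal.ofReal C := by
    rw [mul_comm C r, ENNReal.ofReal_mul hr.le]
  rw [hc1, hc2, mul_assoc, mul_assoc] at hfinal
  have hfinal2 : ENNReal.ofReal (1/8) * (Cd^3)⁻¹ ≤ ENNReal.ofReal C * (η₂*Cd)^(1/p) :=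
    (ENNReal.mul_le_mul_iff_right hor0 ENNReal.ofReal_ne_top).1 hfinal
  rw [ENNReal.mul_rpow_of_nonneg _ _ hinvp, mul_comm (η₂^(1/p)) (Cd^(1/p)),
    ← mul_assoc] at hfinal2
  have hβle : β ≤ η₂^(1/p) := by
    rw [hβ, ENNReal.div_le_iff hD0 hDt, mul_comm]
    exact hfinal2
  have hηle : η ≤ η₂ := by
    have h := ENNReal.rpow_le_rpow hβle hp0.le
    rwa [← ENNReal.rpow_mul, one_div, inv_mul_cancel₀ hp0', ENNReal.rpow_one] at h
  exact absurd (lt_of_le_of_lt hηle hη₂η) (lt_irrefl _)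
end
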